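/- arXiv:1503.08855 — 4 statements merged into one kernel-verified Lean document; each statement's English description precedes it below -/
import Mathlib

section
/- Consider the decentralized ADMM iterates over a connected network. If every local cost f_i : ℝ^p → ℝ is convex (hence closed and proper as a real-valued convex function) and the set of minimizers of s ↦ Σ_{i=1}^n f_i(s) is nonempty, then for any penalty parameter c > 0 the primal iterates converge: there exists a minimizer ŝ of s ↦ Σ_{i=1}^n f_i(s) such that for every node i, s_i(k) → ŝ as k → ∞, and the multiplier iterates v_i(k) also converge to a limit (an optimal dual solution). -/
open Filter Topology

section PSD
variable {E : Type*} [NormedAddCommGroup E] [InnerProductSpace ℝ E]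

lemma psd_cauchy_schwarz' (T : E →ₗ[ℝ] E)
    (hsym : ∀ x y, (inner ℝ (T x) y : ℝ) = inner ℝ x (T y))
    (hpsd : ∀ x, 0 ≤ (inner ℝ (T x) x : ℝ)) (x y : E) :
    (inner ℝ (T x) y : ℝ) ^ 2 ≤ (inner ℝ (T x) x : ℝ) * (inner ℝ (T y) y : ℝ) := by
  have key : ∀ t : ℝ, 0 ≤ (inner ℝ (T y) y : ℝ) * (t * t) + (2 * (inner ℝ (T x) y : ℝ)) * t
      + (inner ℝ (T x) x : ℝ) := by
    intro t
    have h0 := hpsd (x + t • y)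
    have hx : T (x + t • y) = T x + t • T y := by
      rw [map_add, map_smul]
    rw [hx] at h0
    have hyx : (inner ℝ (T y) x : ℝ) = inner ℝ (T x) y := by
      rw [hsym y x, real_inner_comm]
    simp only [inner_add_left, inner_add_right, inner_smul_left, inner_smul_right,
      RCLike.conj_to_real] at h0
    have hy1 : (inner ℝ y (T x) : ℝ) = inner ℝ (T x) y := real_inner_comm _ _
    have hy2 : (inner ℝ y (T y) : ℝ) = inner ℝ (T y) y := real_inner_comm _ _
    rw [hyx] at h0
    nlinarith [h0]
  have hd := discrim_le_zero key
  rw [discrim] at hd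
  nlinarith [hd]


variable [FiniteDimensional ℝ E]

/-- P1: `‖T x‖² ≤ M ⟪T x, x⟫` for symmetric psd `T`. -/
lemma psd_norm_sq_le (T : E →ₗ[ℝ] E)
    (hsym : ∀ x y, (inner ℝ (T x) y : ℝ) = inner ℝ x (T y))
    (hpsd : ∀ x, 0 ≤ (inner ℝ (T x) x : ℝ)) :
    ∃ M : ℝ, 0 < M ∧ ∀ x, ‖T x‖ ^ 2 ≤ M * (inner ℝ (T x) x : ℝ) := by
  set Tc := LinearMap.toContinuousLinearMap T with hTc
  have hM : (0:ℝ) < ‖Tc‖ + 1 := by positivity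
  refine ⟨‖Tc‖ + 1, hM, fun x => ?_⟩
  have hcs := psd_cauchy_schwarz' T hsym hpsd x (T x)
  have h1 : (inner ℝ (T x) (T x) : ℝ) = ‖T x‖ ^ 2 := real_inner_self_eq_norm_sq _
  have hTb : ‖T (T x)‖ ≤ ‖Tc‖ * ‖T x‖ := by
    have := Tc.le_opNorm (T x); exact this
  have h2 : (inner ℝ (T (T x)) (T x) : ℝ) ≤ (‖Tc‖ + 1) * ‖T x‖ ^ 2 := by
    calc (inner ℝ (T (T x)) (T x) : ℝ) ≤ ‖T (T x)‖ * ‖T x‖ := real_inner_le_norm _ _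
    _ ≤ (‖Tc‖ + 1) * ‖T x‖ ^ 2 := by nlinarith [norm_nonneg (T x), norm_nonneg (T (T x)), norm_nonneg Tc]
  rw [h1] at hcs
  rcases (norm_nonneg (T x)).lt_or_eq with h0 | h0
  · have key : (‖T x‖ ^ 2) * (‖T x‖ ^ 2) ≤ ((‖Tc‖ + 1) * (inner ℝ (T x) x : ℝ)) * ‖T x‖ ^ 2 := by
      calc (‖T x‖ ^ 2) * (‖T x‖ ^ 2) = (‖T x‖ ^ 2) ^ 2 := by ring
      _ ≤ (inner ℝ (T x) x : ℝ) * ((inner ℝ (T (T x)) (T x) : ℝ)) := hcs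
      _ ≤ (inner ℝ (T x) x : ℝ) * ((‖Tc‖ + 1) * ‖T x‖ ^ 2) := by
          exact mul_le_mul_of_nonneg_left h2 (hpsd x)
      _ = ((‖Tc‖ + 1) * (inner ℝ (T x) x : ℝ)) * ‖T x‖ ^ 2 := by ring
    have := le_of_mul_le_mul_right key (by positivity : (0:ℝ) < ‖T x‖ ^ 2)
    linarith
  · rw [← h0]
    have := mul_nonneg hM.le (hpsd x)
    nlinarith [this]

/-- range of a symmetric map is the orthogonal complement of its kernel. -/
lemma range_eq_ker_orth (T : E →ₗ[ℝ] E)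
    (hsym : ∀ x y, (inner ℝ (T x) y : ℝ) = inner ℝ x (T y)) :
    LinearMap.range T = (LinearMap.ker T)ᗮ := by
  have horth : (LinearMap.range T)ᗮ = LinearMap.ker T := by
    ext z
    simp only [Submodule.mem_orthogonal, LinearMap.mem_range, LinearMap.mem_ker]
    constructor
    · intro h
      have h2 : (inner ℝ (T z) (T z) : ℝ) = 0 := by
        have h3 := h (T (T z)) ⟨T z, rfl⟩
        rw [real_inner_comm] at h3
        exact (hsym z (T z)).trans h3
      exact inner_self_eq_zero.mp h2
    · rintro h u ⟨w, rfl⟩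
      rw [real_inner_comm, ← hsym z w, h, inner_zero_left]
  rw [← horth]
  exact (Submodule.orthogonal_orthogonal _).symm

/-- P2: spectral-gap type bound `⟪T x, x⟫ ≤ C ‖T x‖²` for symmetric psd `T`. -/
lemma psd_gap (T : E →ₗ[ℝ] E)
    (hsym : ∀ x y, (inner ℝ (T x) y : ℝ) = inner ℝ x (T y))
    (hpsd : ∀ x, 0 ≤ (inner ℝ (T x) x : ℝ)) :
    ∃ C : ℝ, 0 < C ∧ ∀ x, (inner ℝ (T x) x : ℝ) ≤ C * ‖T x‖ ^ 2 := by
  set K : Submodule ℝ E := LinearMap.range T with hK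
  by_cases hbot : K = ⊥
  · refine ⟨1, one_pos, fun x => ?_⟩
    have hx0 : T x = 0 := by
      have : T x ∈ K := ⟨x, rfl⟩
      rw [hbot] at this; simpa using this
    simp [hx0]
  · obtain ⟨z₀, hz₀K, hz₀⟩ := Submodule.exists_mem_ne_zero_of_ne_bot hbot
    set Sp : Set E := {z | z ∈ K ∧ ‖z‖ = 1} with hSp
    have hne : Sp.Nonempty := by
      refine ⟨‖z₀‖⁻¹ • z₀, K.smul_mem _ hz₀K, ?_⟩
      rw [norm_smul, norm_inv, norm_norm, inv_mul_cancel₀ (norm_ne_zero_iff.mpr hz₀)]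
    have hcpt : IsCompact Sp := by
      have hcl : IsClosed Sp := by
        have h1 : IsClosed (K : Set E) := K.closed_of_finiteDimensional
        have h2 : IsClosed {z : E | ‖z‖ = 1} := isClosed_eq continuous_norm continuous_const
        exact h1.inter h2
      have hbd : Bornology.IsBounded Sp := by
        apply Bornology.IsBounded.subset (Metric.isBounded_closedBall (x := (0:E)) (r := 1))
        intro z hz
        simp [Metric.mem_closedBall, dist_zero_right, hz.2.le]
      exact Metric.isCompact_of_isClosed_isBounded hcl hbd
    have hcont : ContinuousOn (fun z => ‖T z‖) Sp :=
      (Continuous.norm (LinearMap.toContinuousLinearMap T).continuous).continuousOn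
    obtain ⟨zm, hzm, hmin⟩ := hcpt.exists_isMinOn hne hcont
    set m : ℝ := ‖T zm‖ with hm
    have hkerorth : ∀ w, w ∈ Kᗮ → T w = 0 := by
      intro w hw
      have h2 : (inner ℝ (T w) (T w) : ℝ) = 0 := by
        have h1 := hw (T (T w)) ⟨T w, rfl⟩
        rw [real_inner_comm] at h1
        exact (hsym w (T w)).trans h1
      exact inner_self_eq_zero.mp h2
    have hmpos : 0 < m := by
      rcases (norm_nonneg (T zm)).lt_or_eq with h | h
      · exact h
      · exfalso
        have hTzm : T zm = 0 := norm_eq_zero.mp h.symm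
        obtain ⟨w, hw⟩ := hzm.1
        have hz : (inner ℝ zm zm : ℝ) = 0 := by
          calc (inner ℝ zm zm : ℝ) = inner ℝ (T w) zm := by rw [hw]
          _ = inner ℝ w (T zm) := hsym w zm
          _ = 0 := by rw [hTzm, inner_zero_right]
        have := inner_self_eq_zero.mp hz
        rw [this] at hzm
        simpa using hzm.2
    have hscale : ∀ z ∈ K, m * ‖z‖ ≤ ‖T z‖ := by
      intro z hz
      rcases eq_or_ne z 0 with rfl | hz0
      · simp
      · have h1 : (‖z‖⁻¹ • z) ∈ Sp := by
          refine ⟨K.smul_mem _ hz, ?_⟩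
          rw [norm_smul, norm_inv, norm_norm, inv_mul_cancel₀ (norm_ne_zero_iff.mpr hz0)]
        have h2 := hmin h1
        simp only [Set.mem_setOf_eq, map_smul, norm_smul, norm_inv, norm_norm] at h2
        have hzpos : 0 < ‖z‖ := norm_pos_iff.mpr hz0
        calc m * ‖z‖ ≤ (‖z‖⁻¹ * ‖T z‖) * ‖z‖ := mul_le_mul_of_nonneg_right h2 hzpos.le
        _ = ‖T z‖ := by field_simp
    refine ⟨m⁻¹, inv_pos.mpr hmpos, fun x => ?_⟩
    set y : E := (K.orthogonalProjectionOnto x : E) with hy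
    have hyK : y ∈ K := (K.orthogonalProjectionOnto x).2
    have hd : x - y ∈ Kᗮ := K.sub_starProjection_mem_orthogonal x
    have hTd : T (x - y) = 0 := hkerorth _ hd
    have hTx : T x = T y := sub_eq_zero.mp (by rw [← map_sub]; exact hTd)
    have hsplit : (inner ℝ (T x) x : ℝ) = inner ℝ (T y) y := by
      have : x = y + (x - y) := by abel
      conv_lhs => rw [hTx, this]
      rw [inner_add_right]
      have hz2 : (inner ℝ (T y) (x - y) : ℝ) = 0 := by
        have h5 := hd (T y) ⟨y, rfl⟩
        exact h5
      rw [hz2, add_zero]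
    rw [hsplit]
    have h1 : (inner ℝ (T y) y : ℝ) ≤ ‖T y‖ * ‖y‖ := real_inner_le_norm _ _
    have h2 : m * ‖y‖ ≤ ‖T y‖ := hscale y hyK
    have key : (inner ℝ (T y) y : ℝ) ≤ ‖T y‖ * (‖T y‖ / m) := by
      apply h1.trans
      apply mul_le_mul_of_nonneg_left _ (norm_nonneg _)
      rw [le_div_iff₀ hmpos]
      linarith [h2]
    have hnorm : ‖T y‖ = ‖T x‖ := by rw [hTx]
    rw [hnorm] at key
    calc (inner ℝ (T y) y : ℝ) ≤ ‖T x‖ * (‖T x‖ / m) := key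
    _ = m⁻¹ * ‖T x‖ ^ 2 := by field_simp
end PSD


section Lagrange
variable {E : Type*} [NormedAddCommGroup E] [InnerProductSpace ℝ E] [FiniteDimensional ℝ E]
  [CompleteSpace E]

/-- Existence of a Lagrange multiplier for minimizing a convex function over a subspace. -/
lemma exists_lagrange (F : E → ℝ) (hF : ConvexOn ℝ Set.univ F) (K : Submodule ℝ E)
    (x₀ : E) (hx₀ : x₀ ∈ K) (hmin : ∀ y ∈ K, F x₀ ≤ F y) :
    ∃ g : E, (∀ y ∈ K, (inner ℝ g y : ℝ) = 0) ∧ ∀ x, F x₀ + (inner ℝ g x : ℝ) ≤ F x := by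
  have hcont : Continuous F := hF.locallyLipschitz.continuous
  set A : Set (E × ℝ) := {q | F q.1 < q.2} with hA
  have hAopen : IsOpen A := isOpen_lt (hcont.comp continuous_fst) continuous_snd
  have hAconv : Convex ℝ A := by
    rintro ⟨q1, t1⟩ hq1 ⟨q2, t2⟩ hq2 a b ha hb hab
    simp only [hA, Set.mem_setOf_eq] at *
    calc F (a • q1 + b • q2) ≤ a * F q1 + b * F q2 :=
          hF.2 (Set.mem_univ _) (Set.mem_univ _) ha hb hab
    _ < a * t1 + b * t2 := by
        rcases eq_or_lt_of_le ha with rfl | ha'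
        · simp only [zero_mul, zero_add] at *
          have hb' : b = 1 := by linarith
          subst hb'; simpa using hq2
        · rcases eq_or_lt_of_le hb with rfl | hb'
          · simp only [mul_zero, add_zero] at *
            have ha'' : a = 1 := by linarith
            subst ha''; simpa using hq1
          · have := mul_lt_mul_of_pos_left hq1 ha'
            have := mul_lt_mul_of_pos_left hq2 hb'
            linarith
  set B : Set (E × ℝ) := (fun y => (y, F x₀)) '' (K : Set E) with hB
  have hBconv : Convex ℝ B := by
    rintro p ⟨z1, hz1, rfl⟩ q ⟨z2, hz2, rfl⟩ a b ha hb hab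
    refine ⟨a • z1 + b • z2, K.add_mem (K.smul_mem _ hz1) (K.smul_mem _ hz2), ?_⟩
    have h2 : F x₀ = a • (F x₀) + b • (F x₀) := by
      rw [smul_eq_mul, smul_eq_mul, ← add_mul, hab, one_mul]
    exact Prod.ext rfl h2
  have hdisj : Disjoint A B := by
    rw [Set.disjoint_left]
    rintro p hp ⟨z, hz, rfl⟩
    simp only [hA, Set.mem_setOf_eq] at hp
    exact absurd hp (not_lt.mpr (hmin z hz))
  obtain ⟨φ, r, h1, h2⟩ := geometric_hahn_banach_open hAconv hAopen hBconv hdisj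
  set β : ℝ := φ (0, 1) with hβ
  set ψ : E → ℝ := fun x => φ (x, 0) with hψ
  have hφ : ∀ x : E, ∀ t : ℝ, φ (x, t) = ψ x + t * β := by
    intro x t
    have : (x, t) = (x, (0:ℝ)) + t • ((0:E), (1:ℝ)) := by
      simp [Prod.smul_mk, Prod.mk_add_mk]
    rw [this, map_add, map_smul]
    simp [hψ, hβ, smul_eq_mul]
  -- ψ vanishes on K
  have hψK : ∀ y ∈ K, ψ y = 0 := by
    intro y hy
    by_contra hne
    -- scale to violate the lower bound r ≤ ψ (m • y) + F x₀ * β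
    have hbound : ∀ m : ℝ, r ≤ m * ψ y + F x₀ * β := by
      intro m
      have hmem : ((m • y, F x₀) : E × ℝ) ∈ B := ⟨m • y, K.smul_mem m hy, rfl⟩
      have := h2 _ hmem
      rw [hφ] at this
      have hψm : ψ (m • y) = m * ψ y := by
        simp only [hψ]
        have : ((m • y, (0:ℝ)) : E × ℝ) = m • (y, (0:ℝ)) := by simp [Prod.smul_mk]
        rw [this, map_smul, smul_eq_mul]
      linarith [this, hψm.symm.trans_le (le_refl _)] -- fix below
    have h3 := hbound ((r - F x₀ * β - 1) / ψ y)
    rw [div_mul_cancel₀ _ hne] at h3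
    linarith
  have hx₀ψ : ψ x₀ = 0 := hψK x₀ hx₀
  -- β < 0
  have hβneg : β < 0 := by
    have hmemA : ((x₀, F x₀ + 1) : E × ℝ) ∈ A := by simp [hA]
    have ha := h1 _ hmemA
    have hb := h2 (x₀, F x₀) ⟨x₀, hx₀, rfl⟩
    rw [hφ] at ha hb
    rw [hx₀ψ] at ha hb
    linarith
  -- main inequality
  have hmain : ∀ x : E, ψ x + F x * β ≤ F x₀ * β := by
    intro x
    have hstep : ∀ ε : ℝ, 0 < ε → ψ x + (F x + ε) * β < F x₀ * β := by
      intro ε hε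
      have hmemA : ((x, F x + ε) : E × ℝ) ∈ A := by simp [hA, hε]
      have ha := h1 _ hmemA
      have hb := h2 (x₀, F x₀) ⟨x₀, hx₀, rfl⟩
      rw [hφ] at ha hb
      rw [hx₀ψ] at hb
      linarith
    by_contra hcon
    push_neg at hcon
    have hβne : β ≠ 0 := by linarith
    have hd : 0 < (ψ x + F x * β - F x₀ * β) / (-β) := by
      apply div_pos (by linarith) (by linarith)
    have h5 := hstep _ hd
    have he : ((ψ x + F x * β - F x₀ * β) / (-β)) * β = -(ψ x + F x * β - F x₀ * β) := by
      rw [div_mul_eq_mul_div, mul_div_assoc, div_neg, div_self hβne]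
      ring
    rw [add_mul] at h5
    linarith [h5, he]
  -- build g
  set ψc : E →L[ℝ] ℝ := φ.comp (ContinuousLinearMap.inl ℝ E ℝ) with hψc
  have hψc_eq : ∀ x, ψc x = ψ x := by
    intro x; simp [hψc, hψ, ContinuousLinearMap.inl_apply]
  set ξ : E := (InnerProductSpace.toDual ℝ E).symm ψc with hξ
  have hξ_eq : ∀ x, (inner ℝ ξ x : ℝ) = ψ x := by
    intro x
    rw [hξ]
    rw [InnerProductSpace.toDual_symm_apply]
    exact hψc_eq x
  refine ⟨(-β)⁻¹ • ξ, fun y hy => ?_, fun x => ?_⟩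
  · rw [inner_smul_left]
    simp only [RCLike.conj_to_real]
    rw [hξ_eq, hψK y hy, mul_zero]
  · have := hmain x
    rw [inner_smul_left]
    simp only [RCLike.conj_to_real]
    rw [hξ_eq]
    have hβpos : 0 < -β := by linarith
    have hβne : β ≠ 0 := by linarith
    have h9 : 0 ≤ F x₀ * β - ψ x - F x * β := by linarith
    have h11 : 0 ≤ (-β)⁻¹ * (F x₀ * β - ψ x - F x * β) :=
      mul_nonneg (inv_pos.mpr hβpos).le h9
    have hb2 : (-β)⁻¹ * β = -1 := by field_simp
    have h12 : (-β)⁻¹ * (F x₀ * β - ψ x - F x * β)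
        = -F x₀ - (-β)⁻¹ * ψ x + F x := by
      linear_combination (F x₀ - F x) * hb2
    linarith [h11, h12.symm.trans_le (le_of_eq rfl)]
end Lagrange


/-- If `0 ≤ A + t B` for all small positive `t`, then `0 ≤ A`. -/
lemma nonneg_of_forall_small {A B : ℝ} (h : ∀ t : ℝ, 0 < t → t ≤ 1 → 0 ≤ A + t * B) :
    0 ≤ A := by
  by_contra hA
  push_neg at hA
  set t : ℝ := min 1 ((-A) / (2 * (|B| + 1))) with ht
  have hApos : 0 < -A := by linarith
  have hden : (0:ℝ) < 2 * (|B| + 1) := by positivity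
  have htpos : 0 < t := lt_min one_pos (div_pos hApos hden)
  have ht1 : t ≤ 1 := min_le_left _ _
  have ht2 : t ≤ (-A) / (2 * (|B| + 1)) := min_le_right _ _
  have hkey := h t htpos ht1
  have htB : t * B ≤ t * |B| := mul_le_mul_of_nonneg_left (le_abs_self B) htpos.le
  have h3 : t * |B| ≤ ((-A) / (2 * (|B| + 1))) * (|B| + 1) := by
    apply mul_le_mul ht2 (by linarith [abs_nonneg B]) (abs_nonneg B)
    positivity
  have h4 : ((-A) / (2 * (|B| + 1))) * (|B| + 1) = -A / 2 := by
    field_simp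
  linarith [hkey, htB, h3, h4.symm.le]

/-- An antitone nonnegative sequence with a subsequence tending to zero tends to zero. -/
lemma tendsto_zero_of_antitone_of_subseq {V : ℕ → ℝ} (hmono : ∀ k l, k ≤ l → V l ≤ V k)
    (hnonneg : ∀ k, 0 ≤ V k) (φ : ℕ → ℕ) (hφ : StrictMono φ)
    (hsub : Tendsto (fun m => V (φ m)) atTop (𝓝 0)) :
    Tendsto V atTop (𝓝 0) := by
  rw [Metric.tendsto_atTop] at hsub ⊢
  intro ε hε
  obtain ⟨M, hM⟩ := hsub ε hε
  refine ⟨φ M, fun k hk => ?_⟩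
  have h1 := hM M le_rfl
  rw [Real.dist_eq] at h1 ⊢
  have h2 : V k ≤ V (φ M) := hmono _ _ hk
  have h3 := hnonneg k
  have h4 := hnonneg (φ M)
  rw [abs_of_nonneg (by linarith)] at h1 ⊢
  linarith

/-- A nonneg sequence whose partial sums are bounded tends to 0. -/
lemma tendsto_zero_of_bounded_partial_sums {a : ℕ → ℝ} (hnonneg : ∀ k, 0 ≤ a k)
    (C : ℝ) (hC : ∀ K, ∑ k ∈ Finset.range K, a k ≤ C) :
    Tendsto a atTop (𝓝 0) := by
  have hsum : Summable a := summable_of_sum_range_le hnonneg hC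
  exact hsum.tendsto_atTop_zero


variable {n p : ℕ}

/-- The product space of node variables. -/
abbrev XSp (n p : ℕ) := PiLp 2 (fun _ : Fin n => EuclideanSpace ℝ (Fin p))

section GraphOps
variable (G : SimpleGraph (Fin n)) [DecidableRel G.Adj]

/-- swap lemma for neighbor sums -/
lemma nbr_sum_swap {M : Type*} [AddCommMonoid M] (h : Fin n → Fin n → M) :
    ∑ i, ∑ j ∈ G.neighborFinset i, h i j = ∑ i, ∑ j ∈ G.neighborFinset i, h j i := by
  have key : ∀ g : Fin n → Fin n → M,
      ∑ i, ∑ j ∈ G.neighborFinset i, g i j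
        = ∑ i, ∑ j, if G.Adj i j then g i j else 0 := by
    intro g
    refine Finset.sum_congr rfl fun i _ => ?_
    rw [SimpleGraph.neighborFinset_eq_filter, Finset.sum_filter]
  rw [key, key]
  rw [Finset.sum_comm]
  refine Finset.sum_congr rfl fun i _ => Finset.sum_congr rfl fun j _ => ?_
  by_cases hadj : G.Adj i j
  · rw [if_pos hadj, if_pos (G.adj_symm hadj)]
  · rw [if_neg hadj, if_neg (fun hc => hadj (G.adj_symm hc))]

/-- graph Laplacian acting blockwise -/
noncomputable def gL : XSp n p →ₗ[ℝ] XSp n p where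
  toFun x := WithLp.toLp 2 (fun i => ∑ j ∈ G.neighborFinset i, (x i - x j))
  map_add' x y := by
    refine PiLp.ext fun i => ?_
    show ∑ j ∈ G.neighborFinset i, (x i + y i - (x j + y j))
        = (∑ j ∈ G.neighborFinset i, (x i - x j)) + ∑ j ∈ G.neighborFinset i, (y i - y j)
    rw [← Finset.sum_add_distrib]
    exact Finset.sum_congr rfl fun j _ => by abel
  map_smul' c x := by
    refine PiLp.ext fun i => ?_
    show ∑ j ∈ G.neighborFinset i, (c • x i - c • x j)
        = c • ∑ j ∈ G.neighborFinset i, (x i - x j)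
    rw [Finset.smul_sum]
    exact Finset.sum_congr rfl fun j _ => (smul_sub c _ _).symm

/-- signless Laplacian acting blockwise -/
noncomputable def gW : XSp n p →ₗ[ℝ] XSp n p where
  toFun x := WithLp.toLp 2 (fun i => ∑ j ∈ G.neighborFinset i, (x i + x j))
  map_add' x y := by
    refine PiLp.ext fun i => ?_
    show ∑ j ∈ G.neighborFinset i, (x i + y i + (x j + y j))
        = (∑ j ∈ G.neighborFinset i, (x i + x j)) + ∑ j ∈ G.neighborFinset i, (y i + y j)
    rw [← Finset.sum_add_distrib]
    exact Finset.sum_congr rfl fun j _ => by abel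
  map_smul' c x := by
    refine PiLp.ext fun i => ?_
    show ∑ j ∈ G.neighborFinset i, (c • x i + c • x j)
        = c • ∑ j ∈ G.neighborFinset i, (x i + x j)
    rw [Finset.smul_sum]
    exact Finset.sum_congr rfl fun j _ => (smul_add c _ _).symm

lemma gL_apply (x : XSp n p) (i : Fin n) :
    gL G x i = ∑ j ∈ G.neighborFinset i, (x i - x j) := rfl

lemma gW_apply (x : XSp n p) (i : Fin n) :
    gW G x i = ∑ j ∈ G.neighborFinset i, (x i + x j) := rfl

lemma inner_gL (x y : XSp n p) :
    (inner ℝ (gL G x) y : ℝ) = ∑ i, ∑ j ∈ G.neighborFinset i, (inner ℝ (x i - x j) (y i) : ℝ) := by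
  rw [PiLp.inner_apply]
  refine Finset.sum_congr rfl fun i _ => ?_
  rw [gL_apply, sum_inner]

lemma inner_gW (x y : XSp n p) :
    (inner ℝ (gW G x) y : ℝ) = ∑ i, ∑ j ∈ G.neighborFinset i, (inner ℝ (x i + x j) (y i) : ℝ) := by
  rw [PiLp.inner_apply]
  refine Finset.sum_congr rfl fun i _ => ?_
  rw [gW_apply, sum_inner]

lemma gL_symm (x y : XSp n p) : (inner ℝ (gL G x) y : ℝ) = inner ℝ x (gL G y) := by
  have h1 : (inner ℝ (gL G x) y : ℝ)
      = ∑ i, ∑ j ∈ G.neighborFinset i, ((inner ℝ (x i) (y i) : ℝ) - inner ℝ (x j) (y i)) := by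
    rw [inner_gL]
    exact Finset.sum_congr rfl fun i _ => Finset.sum_congr rfl fun j _ => by
      rw [inner_sub_left]
  have h2 : (inner ℝ x (gL G y) : ℝ)
      = ∑ i, ∑ j ∈ G.neighborFinset i, ((inner ℝ (x i) (y i) : ℝ) - inner ℝ (x i) (y j)) := by
    rw [real_inner_comm, inner_gL]
    refine Finset.sum_congr rfl fun i _ => Finset.sum_congr rfl fun j _ => ?_
    rw [inner_sub_left, real_inner_comm (y i) (x i), real_inner_comm (y j) (x i)]
  rw [h1, h2]
  have h3 := nbr_sum_swap G (fun i j => (inner ℝ (x j) (y i) : ℝ))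
  simp only [Finset.sum_sub_distrib]
  rw [h3]

lemma gW_symm (x y : XSp n p) : (inner ℝ (gW G x) y : ℝ) = inner ℝ x (gW G y) := by
  have h1 : (inner ℝ (gW G x) y : ℝ)
      = ∑ i, ∑ j ∈ G.neighborFinset i, ((inner ℝ (x i) (y i) : ℝ) + inner ℝ (x j) (y i)) := by
    rw [inner_gW]
    exact Finset.sum_congr rfl fun i _ => Finset.sum_congr rfl fun j _ => by
      rw [inner_add_left]
  have h2 : (inner ℝ x (gW G y) : ℝ)
      = ∑ i, ∑ j ∈ G.neighborFinset i, ((inner ℝ (x i) (y i) : ℝ) + inner ℝ (x i) (y j)) := by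
    rw [real_inner_comm, inner_gW]
    refine Finset.sum_congr rfl fun i _ => Finset.sum_congr rfl fun j _ => ?_
    rw [inner_add_left, real_inner_comm (y i) (x i), real_inner_comm (y j) (x i)]
  rw [h1, h2]
  have h3 := nbr_sum_swap G (fun i j => (inner ℝ (x j) (y i) : ℝ))
  simp only [Finset.sum_add_distrib]
  rw [h3]

/-- quadratic form of gL as a sum over edges -/
lemma inner_gL_self (x : XSp n p) :
    2 * (inner ℝ (gL G x) x : ℝ) = ∑ i, ∑ j ∈ G.neighborFinset i, ‖x i - x j‖ ^ 2 := by
  have h3 := nbr_sum_swap G (fun i j => (inner ℝ (x i - x j) (x i) : ℝ))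
  have key : (inner ℝ (gL G x) x : ℝ) + (inner ℝ (gL G x) x : ℝ)
      = ∑ i, ∑ j ∈ G.neighborFinset i, ‖x i - x j‖ ^ 2 := by
    rw [inner_gL]
    nth_rewrite 2 [h3]
    rw [← Finset.sum_add_distrib]
    refine Finset.sum_congr rfl fun i _ => ?_
    rw [← Finset.sum_add_distrib]
    refine Finset.sum_congr rfl fun j _ => ?_
    have : (inner ℝ (x j - x i) (x j) : ℝ) = inner ℝ (x i - x j) (- x j) := by
      rw [← inner_neg_neg]; congr 1 <;> abel
    rw [this, ← inner_add_right]
    have hxy : x i + -x j = x i - x j := by abel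
    rw [hxy, real_inner_self_eq_norm_sq]
  linarith [key]

lemma inner_gW_self (x : XSp n p) :
    2 * (inner ℝ (gW G x) x : ℝ) = ∑ i, ∑ j ∈ G.neighborFinset i, ‖x i + x j‖ ^ 2 := by
  have h3 := nbr_sum_swap G (fun i j => (inner ℝ (x i + x j) (x i) : ℝ))
  have key : (inner ℝ (gW G x) x : ℝ) + (inner ℝ (gW G x) x : ℝ)
      = ∑ i, ∑ j ∈ G.neighborFinset i, ‖x i + x j‖ ^ 2 := by
    rw [inner_gW]
    nth_rewrite 2 [h3]
    rw [← Finset.sum_add_distrib]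
    refine Finset.sum_congr rfl fun i _ => ?_
    rw [← Finset.sum_add_distrib]
    refine Finset.sum_congr rfl fun j _ => ?_
    have : (inner ℝ (x j + x i) (x j) : ℝ) = inner ℝ (x i + x j) (x j) := by
      congr 1; abel
    rw [this, ← inner_add_right, real_inner_self_eq_norm_sq]
  linarith [key]

lemma gL_psd (x : XSp n p) : 0 ≤ (inner ℝ (gL G x) x : ℝ) := by
  have h := inner_gL_self G x
  have hnn : 0 ≤ ∑ i, ∑ j ∈ G.neighborFinset i, ‖x i - x j‖ ^ 2 :=
    Finset.sum_nonneg fun i _ => Finset.sum_nonneg fun j _ => sq_nonneg _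
  linarith

lemma gW_psd (x : XSp n p) : 0 ≤ (inner ℝ (gW G x) x : ℝ) := by
  have h := inner_gW_self G x
  have hnn : 0 ≤ ∑ i, ∑ j ∈ G.neighborFinset i, ‖x i + x j‖ ^ 2 :=
    Finset.sum_nonneg fun i _ => Finset.sum_nonneg fun j _ => sq_nonneg _
  linarith

/-- L + W = 2 D -/
lemma inner_gL_add_gW (x : XSp n p) :
    (inner ℝ (gL G x) x : ℝ) + (inner ℝ (gW G x) x : ℝ)
      = ∑ i, 2 * (G.degree i : ℝ) * ‖x i‖ ^ 2 := by
  rw [inner_gL, inner_gW, ← Finset.sum_add_distrib]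
  refine Finset.sum_congr rfl fun i _ => ?_
  rw [← Finset.sum_add_distrib]
  have : ∀ j ∈ G.neighborFinset i,
      (inner ℝ (x i - x j) (x i) : ℝ) + (inner ℝ (x i + x j) (x i) : ℝ) = 2 * ‖x i‖^2 := by
    intro j _
    rw [← inner_add_left]
    have : x i - x j + (x i + x j) = (2:ℝ) • x i := by
      rw [two_smul]; abel
    rw [this, inner_smul_left]
    simp only [RCLike.conj_to_real]
    rw [real_inner_self_eq_norm_sq]
  rw [Finset.sum_congr rfl this, Finset.sum_const]
  simp only [SimpleGraph.card_neighborFinset_eq_degree, nsmul_eq_mul]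
  ring

/-- sum of components of gL x vanishes -/
lemma sum_gL (x : XSp n p) : ∑ i, gL G x i = 0 := by
  have h3 := nbr_sum_swap G (fun i j => x i - x j)
  have : ∑ i, gL G x i = ∑ i, ∑ j ∈ G.neighborFinset i, (x i - x j) := rfl
  rw [this]
  have h4 : ∑ i, ∑ j ∈ G.neighborFinset i, (x i - x j)
      = - ∑ i, ∑ j ∈ G.neighborFinset i, (x i - x j) := by
    nth_rewrite 2 [h3]
    rw [← Finset.sum_neg_distrib]
    refine Finset.sum_congr rfl fun i _ => ?_
    rw [← Finset.sum_neg_distrib]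
    exact Finset.sum_congr rfl fun j _ => by abel
  have h5 : (2:ℝ) • ∑ i, ∑ j ∈ G.neighborFinset i, (x i - x j) = 0 := by
    rw [two_smul]
    nth_rewrite 2 [h4]
    abel
  have h6 := smul_eq_zero.mp h5
  rcases h6 with h6 | h6
  · norm_num at h6
  · exact h6
end GraphOps

section Consensus
variable {n p : ℕ} (G : SimpleGraph (Fin n)) [DecidableRel G.Adj]

/-- diagonal embedding -/
noncomputable def diagX (n p : ℕ) : EuclideanSpace ℝ (Fin p) →ₗ[ℝ] XSp n p where
  toFun h := WithLp.toLp 2 (fun _ => h)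
  map_add' x y := rfl
  map_smul' c x := rfl

lemma diagX_apply (h : EuclideanSpace ℝ (Fin p)) (i : Fin n) : diagX n p h i = h := rfl

lemma gL_diag (h : EuclideanSpace ℝ (Fin p)) : gL G (diagX n p h) = 0 := by
  refine PiLp.ext fun i => ?_
  rw [gL_apply]
  have : ∀ j ∈ G.neighborFinset i, diagX n p h i - diagX n p h j = 0 := fun j _ => by
    rw [diagX_apply, diagX_apply, sub_self]
  rw [Finset.sum_congr rfl this, Finset.sum_const, smul_zero]
  rfl

lemma inner_diagX (y : XSp n p) (h : EuclideanSpace ℝ (Fin p)) :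
    (inner ℝ y (diagX n p h) : ℝ) = inner ℝ (∑ i, y i) h := by
  rw [PiLp.inner_apply, sum_inner]
  exact Finset.sum_congr rfl fun i _ => rfl

/-- every vector with zero quadratic form is a consensus vector -/
lemma consensus_of_quad_zero (hG : G.Connected) (x : XSp n p)
    (hq : (inner ℝ (gL G x) x : ℝ) = 0) : ∀ i j, x i = x j := by
  have hsum : ∑ i, ∑ j ∈ G.neighborFinset i, ‖x i - x j‖ ^ 2 = 0 := by
    have := inner_gL_self G x
    rw [hq] at this
    linarith
  have hterm : ∀ i, ∀ j ∈ G.neighborFinset i, ‖x i - x j‖ ^ 2 = 0 := by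
    intro i j hj
    have h1 : ∀ i ∈ (Finset.univ : Finset (Fin n)),
        0 ≤ ∑ j ∈ G.neighborFinset i, ‖x i - x j‖ ^ 2 :=
      fun i _ => Finset.sum_nonneg fun j _ => sq_nonneg _
    have h2 := (Finset.sum_eq_zero_iff_of_nonneg h1).mp hsum i (Finset.mem_univ i)
    have h3 : ∀ j ∈ G.neighborFinset i, (0:ℝ) ≤ ‖x i - x j‖ ^ 2 := fun j _ => sq_nonneg _
    exact (Finset.sum_eq_zero_iff_of_nonneg h3).mp h2 j hj
  have hadj : ∀ i j, G.Adj i j → x i = x j := by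
    intro i j hij
    have h4 := hterm i j ((SimpleGraph.mem_neighborFinset G i j).mpr hij)
    have hns : ‖x i - x j‖ = 0 := sq_eq_zero_iff.mp h4
    rw [norm_eq_zero, sub_eq_zero] at hns
    exact hns
  intro i j
  obtain ⟨w⟩ := hG.preconnected i j
  induction w with
  | nil => rfl
  | cons h w ih => exact (hadj _ _ h).trans ih

/-- surjectivity of gL onto mean-zero vectors -/
lemma gL_surj (hG : G.Connected) (hn0 : 0 < n) (y : XSp n p)
    (hy : ∑ i, y i = 0) : ∃ u : XSp n p, gL G u = y := by
  have hker : LinearMap.ker (gL G (p := p)) = LinearMap.range (diagX n p) := by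
    apply le_antisymm
    · intro x hx
      rw [LinearMap.mem_ker] at hx
      have hq : (inner ℝ (gL G x) x : ℝ) = 0 := by rw [hx, inner_zero_left]
      have hcons := consensus_of_quad_zero G hG x hq
      refine ⟨x ⟨0, hn0⟩, ?_⟩
      refine PiLp.ext fun i => ?_
      rw [diagX_apply]
      exact hcons _ _
    · rintro x ⟨h, rfl⟩
      rw [LinearMap.mem_ker]
      exact gL_diag G h
  have hrange : LinearMap.range (gL G (p := p)) = (LinearMap.ker (gL G (p := p)))ᗮ :=
    range_eq_ker_orth _ (gL_symm G)
  have hmem : y ∈ LinearMap.range (gL G (p := p)) := by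
    rw [hrange, hker]
    intro u hu
    obtain ⟨h, rfl⟩ := hu
    rw [real_inner_comm, inner_diagX, hy, inner_zero_left]
  exact hmem
end Consensus

lemma nonneg_of_mul_nonneg_pos {t x : ℝ} (h : 0 ≤ t * x) (ht : 0 < t) : 0 ≤ x := by
  by_contra hx
  push_neg at hx
  nlinarith


lemma le_max_one_of_sq_le {a C : ℝ} (ha : 0 ≤ a) (h : a^2 ≤ C) : a ≤ max 1 C := by
  rcases le_or_gt a 1 with h1 | h1
  · exact le_trans h1 (le_max_left _ _)
  · have h2 : a ≤ a^2 := by nlinarith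
    exact le_trans (h2.trans h) (le_max_right _ _)

open Filter Topology

set_option maxHeartbeats 1600000 in
/-- Convergence of decentralized ADMM: if the local costs `f i` are convex and the
aggregate cost `s ↦ ∑ i, f i s` has a minimizer, then for any penalty `c > 0` the
primal iterates `s k i` converge to a common minimizer `ŝ` of the aggregate cost,
and the multiplier iterates `v k i` converge as well. -/
theorem decentralized_admm_convergence
    (n p : ℕ) (hn : 2 ≤ n)
    (G : SimpleGraph (Fin n)) (hG : G.Connected)
    [DecidableRel G.Adj]
    (hNbr : ∀ i : Fin n, (G.neighborFinset i).Nonempty)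
    (f : Fin n → EuclideanSpace ℝ (Fin p) → ℝ)
    (hconv : ∀ i, ConvexOn ℝ Set.univ (f i))
    (hmin : ∃ s₀ : EuclideanSpace ℝ (Fin p), ∀ w, ∑ i, f i s₀ ≤ ∑ i, f i w)
    (c : ℝ) (hc : 0 < c)
    (s : ℕ → Fin n → EuclideanSpace ℝ (Fin p))
    (v : ℕ → Fin n → EuclideanSpace ℝ (Fin p))
    -- initialization of the multipliers
    (hv0 : ∀ i, v 0 i = 0)
    -- multiplier update: v_i(k) = v_i(k-1) + c ∑_{j ∈ N_i} (s_i(k) - s_j(k)) for k ≥ 1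
    (hv : ∀ k : ℕ, ∀ i : Fin n,
      v (k + 1) i = v k i + c • ∑ j ∈ G.neighborFinset i, (s (k + 1) i - s (k + 1) j))
    -- primal update: s_i(k+1) minimizes
    -- f_i(s) + v_i(k)ᵀ s + c ∑_{j ∈ N_i} ‖s - (s_i(k)+s_j(k))/2‖²
    (hs : ∀ k : ℕ, ∀ i : Fin n, ∀ w : EuclideanSpace ℝ (Fin p),
      f i (s (k + 1) i) + (inner ℝ (v k i) (s (k + 1) i) : ℝ)
        + c * ∑ j ∈ G.neighborFinset i,
            ‖s (k + 1) i - (2⁻¹ : ℝ) • (s k i + s k j)‖ ^ 2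
      ≤ f i w + (inner ℝ (v k i) w : ℝ)
        + c * ∑ j ∈ G.neighborFinset i,
            ‖w - (2⁻¹ : ℝ) • (s k i + s k j)‖ ^ 2) :
    ∃ shat : EuclideanSpace ℝ (Fin p),
      (∀ w, ∑ i, f i shat ≤ ∑ i, f i w) ∧
      (∀ i, Tendsto (fun k => s k i) atTop (𝓝 shat)) ∧
      (∀ i, ∃ vlim : EuclideanSpace ℝ (Fin p),
        Tendsto (fun k => v k i) atTop (𝓝 vlim)) := by
  classical
  obtain ⟨z₀, hz₀⟩ := hmin
  set S : ℕ → XSp n p := fun k => WithLp.toLp 2 (s k) with hSdef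
  set V : ℕ → XSp n p := fun k => WithLp.toLp 2 (v k) with hVdef
  set R : ℕ → XSp n p := fun k => ∑ t ∈ Finset.range k, S (t+1) with hRdef
  set F : XSp n p → ℝ := fun x => ∑ i, f i (x i) with hFdef
  set qL : XSp n p → ℝ := fun y => c * inner ℝ (gL G y) y with hqLdef
  set qW : XSp n p → ℝ := fun y => c * inner ℝ (gW G y) y with hqWdef
  have hqLnn : ∀ y, 0 ≤ qL y := fun y => mul_nonneg hc.le (gL_psd G y)
  have hqWnn : ∀ y, 0 ≤ qW y := fun y => mul_nonneg hc.le (gW_psd G y)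
  -- per-node variational inequality from the primal update
  have hVI : ∀ k i (w : EuclideanSpace ℝ (Fin p)),
      f i (s (k+1) i) ≤ f i w + (inner ℝ (v k i
        + c • ∑ j ∈ G.neighborFinset i, ((2:ℝ) • s (k+1) i - s k i - s k j))
        (w - s (k+1) i) : ℝ) := by
    intro k i w
    set a := s (k+1) i with ha
    set m : Fin n → EuclideanSpace ℝ (Fin p) := fun j => (2⁻¹ : ℝ) • (s k i + s k j) with hm
    have hlin : ∀ j, ((2:ℝ) • a - s k i - s k j) = (2:ℝ) • (a - m j) := by
      intro j
      rw [smul_sub, hm]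
      have : (2:ℝ) • ((2⁻¹ : ℝ) • (s k i + s k j)) = s k i + s k j := by
        rw [smul_smul]; norm_num
      rw [this]
      abel
    have hApart : (inner ℝ (v k i + c • ∑ j ∈ G.neighborFinset i,
          ((2:ℝ) • a - s k i - s k j)) (w - a) : ℝ)
        = (inner ℝ (v k i) (w - a) : ℝ)
          + 2 * c * ∑ j ∈ G.neighborFinset i, (inner ℝ (a - m j) (w - a) : ℝ) := by
      rw [inner_add_left, real_inner_smul_left, sum_inner]
      have : ∀ j ∈ G.neighborFinset i, (inner ℝ ((2:ℝ) • a - s k i - s k j) (w - a) : ℝ)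
          = 2 * inner ℝ (a - m j) (w - a) := by
        intro j _
        rw [hlin j, real_inner_smul_left]
      rw [Finset.sum_congr rfl this]
      congr 1
      rw [Finset.mul_sum, Finset.mul_sum]
      exact Finset.sum_congr rfl fun j _ => by ring
    have key : ∀ t : ℝ, 0 < t → t ≤ 1 →
        0 ≤ (f i w - f i a + (inner ℝ (v k i
          + c • ∑ j ∈ G.neighborFinset i, ((2:ℝ) • a - s k i - s k j)) (w - a) : ℝ))
          + t * (c * (G.degree i : ℝ) * ‖w - a‖^2) := by
      intro t ht0 ht1
      have hsk := hs k i (a + t • (w - a))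
      have hcvx : f i (a + t • (w - a)) ≤ (1 - t) * f i a + t * f i w := by
        have h2 := (hconv i).2 (Set.mem_univ a) (Set.mem_univ w)
          (by linarith : (0:ℝ) ≤ 1 - t) ht0.le (by ring)
        have h3 : a + t • (w - a) = (1 - t) • a + t • w := by
          rw [smul_sub, sub_smul, one_smul]; abel
        rw [h3]
        simpa using h2
      have hinn : (inner ℝ (v k i) (a + t • (w - a)) : ℝ)
          = (inner ℝ (v k i) a : ℝ) + t * (inner ℝ (v k i) (w - a) : ℝ) := by
        rw [inner_add_right, real_inner_smul_right]
      have hnorm : ∀ j ∈ G.neighborFinset i,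
          ‖(a + t • (w - a)) - (2⁻¹ : ℝ) • (s k i + s k j)‖^2
          = ‖a - m j‖^2 + t * (2 * (inner ℝ (a - m j) (w - a) : ℝ)) + t^2 * ‖w - a‖^2 := by
        intro j _
        have h4 : (a + t • (w - a)) - (2⁻¹ : ℝ) • (s k i + s k j)
            = (a - m j) + t • (w - a) := by rw [hm]; abel
        rw [h4, norm_add_sq_real, real_inner_smul_right, norm_smul]
        rw [mul_pow, Real.norm_eq_abs, sq_abs]
        ring
      have hsum : ∑ j ∈ G.neighborFinset i, ‖(a + t • (w - a)) - (2⁻¹ : ℝ) • (s k i + s k j)‖^2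
          = (∑ j ∈ G.neighborFinset i, ‖a - m j‖^2)
            + t * (2 * ∑ j ∈ G.neighborFinset i, (inner ℝ (a - m j) (w - a) : ℝ))
            + t^2 * (G.degree i : ℝ) * ‖w - a‖^2 := by
        rw [Finset.sum_congr rfl hnorm, Finset.sum_add_distrib, Finset.sum_add_distrib]
        rw [Finset.sum_const, ← Finset.mul_sum, SimpleGraph.card_neighborFinset_eq_degree,
          nsmul_eq_mul, ← Finset.mul_sum]
        ring
      have hmj : ∀ j ∈ G.neighborFinset i, ‖a - (2⁻¹:ℝ) • (s k i + s k j)‖^2 = ‖a - m j‖^2 := by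
        intro j _; rw [hm]
      rw [Finset.sum_congr rfl hmj, hsum, hinn] at hsk
      rw [hApart]
      have hdeg : (0:ℝ) ≤ (G.degree i : ℝ) := Nat.cast_nonneg _
      have hmain : 0 ≤ t * ((f i w - f i a + ((inner ℝ (v k i) (w - a) : ℝ)
          + 2 * c * ∑ j ∈ G.neighborFinset i, (inner ℝ (a - m j) (w - a) : ℝ)))
          + t * (c * (G.degree i : ℝ) * ‖w - a‖^2)) := by
        nlinarith [hsk, hcvx]
      have := nonneg_of_mul_nonneg_pos hmain ht0
      linarith [this]
    have hfin := nonneg_of_forall_small key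
    linarith [hfin]
  -- rewriting the multiplier in the VI
  have hQ : ∀ k i, v k i + c • ∑ j ∈ G.neighborFinset i, ((2:ℝ) • s (k+1) i - s k i - s k j)
      = v (k+1) i + c • (gW G (S (k+1) - S k)) i := by
    intro k i
    rw [hv k i, gW_apply]
    have hper : ∀ j ∈ G.neighborFinset i, ((2:ℝ) • s (k+1) i - s k i - s k j)
        = (s (k+1) i - s (k+1) j) + ((S (k+1) - S k) i + (S (k+1) - S k) j) := by
      intro j _
      show (2:ℝ) • s (k+1) i - s k i - s k j
          = (s (k+1) i - s (k+1) j) + ((s (k+1) i - s k i) + (s (k+1) j - s k j))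
      rw [two_smul]; abel
    rw [Finset.sum_congr rfl hper, Finset.sum_add_distrib, smul_add, add_assoc]
  have hRsucc : ∀ k, R (k+1) = R k + S (k+1) := by
    intro k
    rw [hRdef]
    exact Finset.sum_range_succ _ _
  -- multipliers live in the range of the Laplacian
  have hrv : ∀ k, V k = c • gL G (R k) := by
    intro k
    induction k with
    | zero =>
      have h0 : R 0 = 0 := by rw [hRdef]; simp
      rw [h0, map_zero, smul_zero]
      refine PiLp.ext fun i => ?_
      exact hv0 i
    | succ k ih =>
      have hstep : V (k+1) = V k + c • gL G (S (k+1)) := by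
        refine PiLp.ext fun i => ?_
        exact hv k i
      rw [hstep, ih, hRsucc k, map_add, smul_add]
  have hVsum0 : ∀ k, ∑ i, V k i = 0 := by
    intro k
    rw [hrv k]
    have h1 : ∀ i ∈ Finset.univ, (c • gL G (R k)) i = c • (gL G (R k) i) :=
      fun i _ => rfl
    rw [Finset.sum_congr rfl h1, ← Finset.smul_sum, sum_gL, smul_zero]
  -- summed variational inequality
  have hVIsum : ∀ k (w : XSp n p),
      F (S (k+1)) ≤ F w
        + (inner ℝ (V (k+1) + c • gW G (S (k+1) - S k)) (w - S (k+1)) : ℝ) := by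
    intro k w
    have hsum : ∑ i, f i (s (k+1) i) ≤ ∑ i, (f i (w i)
        + (inner ℝ (v (k+1) i + c • (gW G (S (k+1) - S k)) i) (w i - s (k+1) i) : ℝ)) := by
      refine Finset.sum_le_sum fun i _ => ?_
      have h := hVI k i (w i)
      rw [hQ k i] at h
      exact h
    rw [hFdef]
    calc ∑ i, f i (S (k+1) i) = ∑ i, f i (s (k+1) i) := rfl
    _ ≤ ∑ i, (f i (w i)
        + (inner ℝ (v (k+1) i + c • (gW G (S (k+1) - S k)) i) (w i - s (k+1) i) : ℝ)) := hsum
    _ = (∑ i, f i (w i)) + ∑ i,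
        (inner ℝ ((V (k+1) + c • gW G (S (k+1) - S k)) i) ((w - S (k+1)) i) : ℝ) := by
        rw [Finset.sum_add_distrib]
        refine congrArg₂ (· + ·) rfl ?_
        exact Finset.sum_congr rfl fun i _ => rfl
    _ = (∑ i, f i (w i))
        + (inner ℝ (V (k+1) + c • gW G (S (k+1) - S k)) (w - S (k+1)) : ℝ) := by
        rw [PiLp.inner_apply]
  -- master Lyapunov inequality
  -- polarization identity for symmetric operators
  have hpol : ∀ (T : XSp n p →ₗ[ℝ] XSp n p),
      (∀ x y : XSp n p, (inner ℝ (T x) y : ℝ) = inner ℝ x (T y)) →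
      ∀ a b : XSp n p, 2 * (inner ℝ (T a) (a - b) : ℝ)
        = (inner ℝ (T a) a : ℝ) - inner ℝ (T b) b + inner ℝ (T (a-b)) (a-b) := by
    intro T hsym a b
    have hflip : (inner ℝ (T a) b : ℝ) = inner ℝ (T b) a := by
      rw [hsym a b, real_inner_comm]
    have hexp : (inner ℝ (T (a-b)) (a-b) : ℝ)
        = (inner ℝ (T a) a : ℝ) - inner ℝ (T a) b - inner ℝ (T b) a + inner ℝ (T b) b := by
      rw [map_sub, inner_sub_left, inner_sub_right, inner_sub_right]
      ring
    have hlhs : (inner ℝ (T a) (a - b) : ℝ) = (inner ℝ (T a) a : ℝ) - inner ℝ (T a) b := by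
      rw [inner_sub_right]
    rw [hlhs, hexp]
    linarith [hflip]
  have hmaster : ∀ (z : EuclideanSpace ℝ (Fin p)) (u : XSp n p),
      (∀ w : XSp n p, F (diagX n p z) ≤ F w + (inner ℝ (c • gL G u) (w - diagX n p z) : ℝ)) →
      ∀ k, qL (R (k+1) - u) + qW (S (k+1) - diagX n p z)
          + (qL (S (k+1) - diagX n p z) + qW (S (k+1) - S k))
        ≤ qL (R k - u) + qW (S k - diagX n p z) := by
    intro z u hsad k
    set dz : XSp n p := diagX n p z with hdz
    set e' : XSp n p := R (k+1) - u with he'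
    set e : XSp n p := R k - u with he
    set x' : XSp n p := S (k+1) - dz with hx'
    set x : XSp n p := S k - dz with hx
    -- the key inequality
    have hKEY : (inner ℝ (V (k+1)) x' : ℝ) + c * (inner ℝ (gW G (S (k+1) - S k)) x' : ℝ)
        - c * (inner ℝ (gL G u) x' : ℝ) ≤ 0 := by
      have h1 := hVIsum k dz
      have h2 := hsad (S (k+1))
      have h3 : 0 ≤ (inner ℝ (V (k+1) + c • gW G (S (k+1) - S k)) (dz - S (k+1)) : ℝ)
          + (inner ℝ (c • gL G u) (S (k+1) - dz) : ℝ) := by linarith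
      have h4 : dz - S (k+1) = -(S (k+1) - dz) := (neg_sub _ _).symm
      rw [h4, inner_neg_right, inner_add_left, real_inner_smul_left,
        real_inner_smul_left] at h3
      rw [← hx'] at h3
      linarith
    -- rewrite the Laplacian part
    have hT1 : (inner ℝ (V (k+1)) x' : ℝ) - c * (inner ℝ (gL G u) x' : ℝ)
        = c * (inner ℝ (gL G e') x' : ℝ) := by
      rw [hrv (k+1), he', map_sub]
      rw [inner_sub_left]
      have h5 : (inner ℝ ((c • gL G (R (k+1)) : XSp n p)) x' : ℝ)
          = c * inner ℝ (gL G (R (k+1))) x' := real_inner_smul_left _ _ _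
      rw [h5]
      ring
    -- identification of differences
    have hee : e' - e = S (k+1) := by
      rw [he', he, hRsucc k]; abel
    have hgLx' : gL G x' = gL G (e' - e) := by
      rw [hee, hx', map_sub, gL_diag, sub_zero]
    have hxx : x' - x = S (k+1) - S k := by
      rw [hx', hx]; abel
    -- T1 as polarization
    have hT1b : (inner ℝ (gL G e') x' : ℝ) = inner ℝ (gL G e') (e' - e) := by
      have h8 : (inner ℝ (gL G e') x' : ℝ) = inner ℝ e' (gL G x') := gL_symm G e' x'
      rw [h8, hgLx']
      exact (gL_symm G e' (e' - e)).symm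
    have hpolL := hpol (gL G) (gL_symm G) e' e
    have hquadL : (inner ℝ (gL G (e' - e)) (e' - e) : ℝ) = inner ℝ (gL G x') x' := by
      rw [← hgLx']
      have h6 : (inner ℝ (gL G x') (e' - e) : ℝ) = inner ℝ (gL G x') (x' + dz) := by
        rw [hee, hx']
        congr 1
        abel
      rw [h6, inner_add_right]
      have h7 : (inner ℝ (gL G x') dz : ℝ) = 0 := by
        rw [gL_symm, hdz, gL_diag, inner_zero_right]
      rw [h7, add_zero]
    -- T2 as polarization
    have hT2 : (inner ℝ (gW G (S (k+1) - S k)) x' : ℝ) = inner ℝ (gW G x') (x' - x) := by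
      have h8 : (inner ℝ (gW G (S (k+1) - S k)) x' : ℝ)
          = inner ℝ (S (k+1) - S k) (gW G x') := gW_symm G _ _
      rw [h8, real_inner_comm, hxx]
    have hpolW := hpol (gW G) (gW_symm G) x' x
    have hquadW : (inner ℝ (gW G (x' - x)) (x' - x) : ℝ)
        = inner ℝ (gW G (S (k+1) - S k)) (S (k+1) - S k) := by rw [hxx]
    -- combine
    have hcomb : 2 * (inner ℝ (gL G e') x' : ℝ) + 2 * (inner ℝ (gW G (S (k+1) - S k)) x' : ℝ)
        = ((inner ℝ (gL G e') e' : ℝ) - inner ℝ (gL G e) e + inner ℝ (gL G x') x')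
        + ((inner ℝ (gW G x') x' : ℝ) - inner ℝ (gW G x) x
          + inner ℝ (gW G (S (k+1) - S k)) (S (k+1) - S k)) := by
      rw [hT1b, hT2, hpolL, hpolW, hquadL, hquadW]
    simp only [hqLdef, hqWdef]
    have hKEY2 : c * ((inner ℝ (gL G e') x' : ℝ) + (inner ℝ (gW G (S (k+1) - S k)) x' : ℝ)) ≤ 0 := by
      have : c * (inner ℝ (gL G e') x' : ℝ)
          + c * (inner ℝ (gW G (S (k+1) - S k)) x' : ℝ) ≤ 0 := by
        rw [← hT1]
        linarith [hKEY]
      linarith [this]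
    nlinarith [hcomb, hKEY2, hc]
  -- consequences of the master inequality
  have hmono : ∀ (z : EuclideanSpace ℝ (Fin p)) (u : XSp n p),
      (∀ k, qL (R (k+1) - u) + qW (S (k+1) - diagX n p z)
          + (qL (S (k+1) - diagX n p z) + qW (S (k+1) - S k))
        ≤ qL (R k - u) + qW (S k - diagX n p z)) →
      ∀ k l, k ≤ l → qL (R l - u) + qW (S l - diagX n p z)
        ≤ qL (R k - u) + qW (S k - diagX n p z) := by
    intro z u hm k l hkl
    induction l, hkl using Nat.le_induction with
    | base => exact le_rfl
    | succ l hkl ih =>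
      have h1 := hm l
      have h2 := hqLnn (S (l+1) - diagX n p z)
      have h3 := hqWnn (S (l+1) - S l)
      linarith
  have htend0 : ∀ (z : EuclideanSpace ℝ (Fin p)) (u : XSp n p),
      (∀ k, qL (R (k+1) - u) + qW (S (k+1) - diagX n p z)
          + (qL (S (k+1) - diagX n p z) + qW (S (k+1) - S k))
        ≤ qL (R k - u) + qW (S k - diagX n p z)) →
      Tendsto (fun k => qL (S (k+1) - diagX n p z) + qW (S (k+1) - S k)) atTop (𝓝 0) := by
    intro z u hm
    have hps : ∀ K, (∑ k ∈ Finset.range K,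
        (qL (S (k+1) - diagX n p z) + qW (S (k+1) - S k)))
        + (qL (R K - u) + qW (S K - diagX n p z))
        ≤ qL (R 0 - u) + qW (S 0 - diagX n p z) := by
      intro K
      induction K with
      | zero => simp
      | succ K ih =>
        rw [Finset.sum_range_succ]
        have h1 := hm K
        linarith
    apply tendsto_zero_of_bounded_partial_sums
      (fun k => add_nonneg (hqLnn _) (hqWnn _))
      (qL (R 0 - u) + qW (S 0 - diagX n p z))
    intro K
    have h2 := hps K
    have h3 := hqLnn (R K - u)
    have h4 := hqWnn (S K - diagX n p z)
    linarith
  -- convexity of the aggregate cost on the product space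
  have hFconv : ConvexOn ℝ Set.univ F := by
    constructor
    · exact convex_univ
    · intro x _ y _ a b ha hb hab
      calc F (a • x + b • y) = ∑ i, f i (a • x i + b • y i) := rfl
      _ ≤ ∑ i, (a * f i (x i) + b * f i (y i)) := Finset.sum_le_sum fun i _ =>
          (hconv i).2 (Set.mem_univ _) (Set.mem_univ _) ha hb hab
      _ = a * F x + b * F y := by
          rw [Finset.sum_add_distrib, ← Finset.mul_sum, ← Finset.mul_sum]
  -- phase 1: existence of a dual optimal certificate at z₀
  have hsad₀ : ∃ u₀ : XSp n p,
      ∀ w : XSp n p, F (diagX n p z₀) ≤ F w + (inner ℝ (c • gL G u₀) (w - diagX n p z₀) : ℝ) := by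
    set K : Submodule ℝ (XSp n p) := LinearMap.range (diagX n p) with hK
    have hx₀K : diagX n p z₀ ∈ K := ⟨z₀, rfl⟩
    have hminK : ∀ y ∈ K, F (diagX n p z₀) ≤ F y := by
      rintro y ⟨h, rfl⟩
      have h1 : F (diagX n p h) = ∑ i, f i h := rfl
      have h2 : F (diagX n p z₀) = ∑ i, f i z₀ := rfl
      rw [h1, h2]
      exact hz₀ h
    obtain ⟨g, hgK, hg⟩ := exists_lagrange F hFconv K _ hx₀K hminK
    have hgsum : ∑ i, g i = 0 := by
      have h3 : ∀ h, (inner ℝ g (diagX n p h) : ℝ) = 0 := fun h => hgK _ ⟨h, rfl⟩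
      have h4 : ∀ h, (inner ℝ (∑ i, g i) h : ℝ) = 0 := by
        intro h
        have := h3 h
        rwa [inner_diagX] at this
      exact inner_self_eq_zero.mp (h4 (∑ i, g i))
    obtain ⟨u₀, hu₀⟩ := gL_surj G hG (by omega : 0 < n) ((-c⁻¹ : ℝ) • g) (by
      have h5 : ∑ i, ((-c⁻¹ : ℝ) • g) i = ∑ i, (-c⁻¹ : ℝ) • g i :=
        Finset.sum_congr rfl fun i _ => rfl
      rw [h5, ← Finset.smul_sum, hgsum, smul_zero])
    have hgl : c • gL G u₀ = -g := by
      rw [hu₀, smul_smul]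
      have h6 : c * (-c⁻¹) = -1 := by
        rw [mul_neg, mul_inv_cancel₀ hc.ne']
      rw [h6, neg_one_smul]
    refine ⟨u₀, fun w => ?_⟩
    have h7 := hg w
    have h8 : (inner ℝ (c • gL G u₀) (w - diagX n p z₀) : ℝ) = -(inner ℝ g w : ℝ) := by
      rw [hgl, inner_neg_left, inner_sub_right, hgK _ hx₀K]
      ring
    rw [h8]
    linarith
  obtain ⟨u₀, hsad₀⟩ := hsad₀
  have hmas₀ := hmaster z₀ u₀ hsad₀
  have hγd₀ := htend0 z₀ u₀ hmas₀
  have hγ0 : Tendsto (fun k => qL (S (k+1) - diagX n p z₀)) atTop (𝓝 0) := by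
    refine squeeze_zero (fun k => hqLnn _) (fun k => ?_) hγd₀
    have := hqWnn (S (k+1) - S k)
    linarith
  have hd0 : Tendsto (fun k => qW (S (k+1) - S k)) atTop (𝓝 0) := by
    refine squeeze_zero (fun k => hqWnn _) (fun k => ?_) hγd₀
    have := hqLnn (S (k+1) - diagX n p z₀)
    linarith
  -- componentwise bound via degrees
  have hcompb : ∀ (y : XSp n p) (i : Fin n), 2*c*‖y i‖^2 ≤ qL y + qW y := by
    intro y i
    have h1 := inner_gL_add_gW G y
    have h2 : qL y + qW y = c * ∑ j, 2 * (G.degree j : ℝ) * ‖y j‖^2 := by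
      simp only [hqLdef, hqWdef]
      rw [← mul_add, h1]
    have hdeg : (1:ℝ) ≤ (G.degree i : ℝ) := by
      have h0 := Finset.card_pos.mpr (hNbr i)
      rw [SimpleGraph.card_neighborFinset_eq_degree] at h0
      exact_mod_cast h0
    have h3 : 2 * ‖y i‖^2 ≤ ∑ j, 2 * (G.degree j : ℝ) * ‖y j‖^2 := by
      have hterm : ∀ j ∈ (Finset.univ : Finset (Fin n)),
          (0:ℝ) ≤ 2 * (G.degree j : ℝ) * ‖y j‖^2 := by
        intro j _
        positivity
      have hsingle := Finset.single_le_sum hterm (Finset.mem_univ i)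
      nlinarith [sq_nonneg ‖y i‖]
    calc 2*c*‖y i‖^2 = c * (2 * ‖y i‖^2) := by ring
    _ ≤ c * ∑ j, 2 * (G.degree j : ℝ) * ‖y j‖^2 := mul_le_mul_of_nonneg_left h3 hc.le
    _ = qL y + qW y := h2.symm
  -- boundedness of iterates
  have hbd : ∃ RB : ℝ, 0 < RB ∧ ∀ k, ‖S (k+1)‖ ≤ RB ∧ ‖V (k+1)‖ ≤ RB := by
    obtain ⟨ML, hMLpos, hML⟩ := psd_norm_sq_le (gL G (p := p)) (gL_symm G) (gL_psd G)
    set C₀ : ℝ := qL (R 0 - u₀) + qW (S 0 - diagX n p z₀) with hC₀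
    have hC₀nn : 0 ≤ C₀ := add_nonneg (hqLnn _) (hqWnn _)
    have hVle : ∀ l, qL (R l - u₀) + qW (S l - diagX n p z₀) ≤ C₀ :=
      fun l => hmono z₀ u₀ hmas₀ 0 l (Nat.zero_le l)
    have hqLS : ∀ k, qL (S (k+1) - diagX n p z₀) + qW (S (k+1) - diagX n p z₀) ≤ 2 * C₀ := by
      intro k
      have h1 := hmas₀ k
      have h2 := hVle k
      have h3 := hVle (k+1)
      have h4 := hqLnn (R (k+1) - u₀)
      have h5 := hqWnn (S (k+1) - S k)
      have h6 := hqLnn (S (k+1) - diagX n p z₀)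
      have h7 := hqWnn (S (k+1) - diagX n p z₀)
      linarith
    have hScomp : ∀ k i, ‖(S (k+1) - diagX n p z₀) i‖^2 ≤ C₀ / c := by
      intro k i
      have h1 := hcompb (S (k+1) - diagX n p z₀) i
      have h2 := hqLS k
      rw [le_div_iff₀ hc]
      nlinarith
    have hSnormsq : ∀ k, ‖S (k+1) - diagX n p z₀‖^2 ≤ (n:ℝ) * (C₀ / c) := by
      intro k
      have h1 : ‖S (k+1) - diagX n p z₀‖^2 = ∑ i, ‖(S (k+1) - diagX n p z₀) i‖^2 := by
        rw [← real_inner_self_eq_norm_sq, PiLp.inner_apply]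
        exact Finset.sum_congr rfl fun i _ => real_inner_self_eq_norm_sq _
      rw [h1]
      calc ∑ i, ‖(S (k+1) - diagX n p z₀) i‖^2 ≤ ∑ _i : Fin n, (C₀ / c) :=
          Finset.sum_le_sum fun i _ => hScomp k i
      _ = (n:ℝ) * (C₀ / c) := by
          rw [Finset.sum_const, Finset.card_univ, Fintype.card_fin, nsmul_eq_mul]
    have hVnormsq : ∀ k, ‖V (k+1) - c • gL G u₀‖^2 ≤ c * ML * C₀ := by
      intro k
      have h1 : V (k+1) - c • gL G u₀ = c • gL G (R (k+1) - u₀) := by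
        rw [hrv (k+1), map_sub, smul_sub]
      rw [h1]
      have h2 : ‖c • gL G (R (k+1) - u₀)‖^2 = c^2 * ‖gL G (R (k+1) - u₀)‖^2 := by
        rw [norm_smul, mul_pow, Real.norm_eq_abs, sq_abs]
      rw [h2]
      have h3 := hML (R (k+1) - u₀)
      have h4 : qL (R (k+1) - u₀) ≤ C₀ := by
        have h5 := hVle (k+1)
        have h6 := hqWnn (S (k+1) - diagX n p z₀)
        linarith
      have h7 : c * (inner ℝ (gL G (R (k+1) - u₀)) (R (k+1) - u₀) : ℝ) ≤ C₀ := h4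
      have h8 : c^2 * ‖gL G (R (k+1) - u₀)‖^2
          ≤ c^2 * (ML * (inner ℝ (gL G (R (k+1) - u₀)) (R (k+1) - u₀) : ℝ)) :=
        mul_le_mul_of_nonneg_left h3 (sq_nonneg c)
      have h9 : c * ML * (c * (inner ℝ (gL G (R (k+1) - u₀)) (R (k+1) - u₀) : ℝ))
          ≤ c * ML * C₀ := mul_le_mul_of_nonneg_left h7 (by positivity)
      nlinarith [h8, h9]
    set RS : ℝ := ‖diagX n p z₀‖ + max 1 ((n:ℝ) * (C₀ / c)) with hRS
    set RV : ℝ := ‖c • gL G u₀‖ + max 1 (c * ML * C₀) with hRV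
    refine ⟨max RS RV + 1, ?_, fun k => ⟨?_, ?_⟩⟩
    · have h1 : (0:ℝ) ≤ RS := by
        have := le_max_left (1:ℝ) ((n:ℝ) * (C₀ / c))
        have := norm_nonneg (diagX n p z₀ : XSp n p)
        rw [hRS]
        linarith
      have := le_max_left RS RV
      linarith
    · have h1 : ‖S (k+1)‖ ≤ ‖S (k+1) - diagX n p z₀‖ + ‖diagX n p z₀‖ := by
        have h2 := norm_add_le (S (k+1) - diagX n p z₀) (diagX n p z₀)
        have h3 : S (k+1) - diagX n p z₀ + diagX n p z₀ = S (k+1) := by abel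
        rwa [h3] at h2
      have h4 : ‖S (k+1) - diagX n p z₀‖ ≤ max 1 ((n:ℝ) * (C₀ / c)) :=
        le_max_one_of_sq_le (norm_nonneg _) (hSnormsq k)
      have h5 := le_max_left RS RV
      rw [hRS] at h5
      linarith
    · have h1 : ‖V (k+1)‖ ≤ ‖V (k+1) - c • gL G u₀‖ + ‖c • gL G u₀‖ := by
        have h2 := norm_add_le (V (k+1) - c • gL G u₀) (c • gL G u₀)
        have h3 : V (k+1) - c • gL G u₀ + c • gL G u₀ = V (k+1) := by abel
        rwa [h3] at h2
      have h4 : ‖V (k+1) - c • gL G u₀‖ ≤ max 1 (c * ML * C₀) :=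
        le_max_one_of_sq_le (norm_nonneg _) (hVnormsq k)
      have h5 := le_max_right RS RV
      rw [hRV] at h5
      linarith
  obtain ⟨RB, hRBpos, hRB⟩ := hbd
  -- subsequence extraction
  have hsub : ∃ (Shat Vhat : XSp n p) (φ : ℕ → ℕ), StrictMono φ ∧
      Tendsto (fun m => S (φ m + 1)) atTop (𝓝 Shat) ∧
      Tendsto (fun m => V (φ m + 1)) atTop (𝓝 Vhat) := by
    have hmem : ∀ m : ℕ, ((S (m+1), V (m+1)) : XSp n p × XSp n p)
        ∈ Metric.closedBall (0 : XSp n p × XSp n p) RB := by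
      intro m
      rw [Metric.mem_closedBall, dist_zero_right, Prod.norm_def]
      exact max_le (hRB m).1 (hRB m).2
    obtain ⟨q, _, φ, hφmono, hφtend⟩ :=
      tendsto_subseq_of_bounded Metric.isBounded_closedBall hmem
    refine ⟨q.1, q.2, φ, hφmono, ?_, ?_⟩
    · exact (continuous_fst.tendsto q).comp hφtend
    · exact (continuous_snd.tendsto q).comp hφtend
  obtain ⟨Shat, Vhat, φ, hφ, hS1, hV1⟩ := hsub
  -- helper: componentwise convergence from global and vice versa
  have hcomp_le : ∀ (y : XSp n p) (i : Fin n), ‖y i‖ ≤ ‖y‖ := by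
    intro y i
    have h1 : ‖y‖^2 = ∑ j, ‖y j‖^2 := by
      rw [← real_inner_self_eq_norm_sq, PiLp.inner_apply]
      exact Finset.sum_congr rfl fun j _ => real_inner_self_eq_norm_sq _
    have h2 : ‖y i‖^2 ≤ ∑ j, ‖y j‖^2 :=
      Finset.single_le_sum (f := fun j => ‖y j‖^2) (fun j _ => sq_nonneg _) (Finset.mem_univ i)
    nlinarith [norm_nonneg (y i), norm_nonneg y]
  -- small helpers
  have hsq0 : ∀ (a : ℕ → ℝ), (∀ k, 0 ≤ a k) → Tendsto (fun k => (a k)^2) atTop (𝓝 0) →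
      Tendsto a atTop (𝓝 0) := by
    intro a hnn hsq
    have h1 := hsq.sqrt
    rw [Real.sqrt_zero] at h1
    have h2 : (fun k => Real.sqrt ((a k)^2)) = a := funext fun k => Real.sqrt_sq (hnn k)
    rwa [h2] at h1
  have hcompt : ∀ (x : ℕ → XSp n p) (aL : XSp n p), Tendsto x atTop (𝓝 aL) →
      ∀ i, Tendsto (fun m => x m i) atTop (𝓝 (aL i)) := by
    intro x aL hx i
    rw [tendsto_iff_norm_sub_tendsto_zero] at hx ⊢
    exact squeeze_zero (fun m => norm_nonneg _) (fun m => hcomp_le (x m - aL) i) hx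
  -- edge quantities
  have hedgeLq : ∀ (y : XSp n p) (i j : Fin n), G.Adj i j → c * ‖y i - y j‖^2 ≤ 2 * qL y := by
    intro y i j hadj
    have h1 := inner_gL_self G y
    have h2 : ‖y i - y j‖^2 ≤ ∑ i', ∑ j' ∈ G.neighborFinset i', ‖y i' - y j'‖^2 := by
      have h3 : ∀ i' ∈ (Finset.univ : Finset (Fin n)),
          (0:ℝ) ≤ ∑ j' ∈ G.neighborFinset i', ‖y i' - y j'‖^2 :=
        fun i' _ => Finset.sum_nonneg fun j' _ => sq_nonneg _
      have h4 := Finset.single_le_sum h3 (Finset.mem_univ i)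
      have h5 : ∀ j' ∈ G.neighborFinset i, (0:ℝ) ≤ ‖y i - y j'‖^2 := fun j' _ => sq_nonneg _
      have h6 := Finset.single_le_sum h5 ((SimpleGraph.mem_neighborFinset G i j).mpr hadj)
      linarith
    have h7 : c * ‖y i - y j‖^2 ≤ c * ∑ i', ∑ j' ∈ G.neighborFinset i', ‖y i' - y j'‖^2 :=
      mul_le_mul_of_nonneg_left h2 hc.le
    have h8 : c * ∑ i', ∑ j' ∈ G.neighborFinset i', ‖y i' - y j'‖^2 = 2 * qL y := by
      rw [← h1]
      simp only [hqLdef]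
      ring
    linarith
  have hedgeWq : ∀ (y : XSp n p) (i j : Fin n), G.Adj i j → c * ‖y i + y j‖^2 ≤ 2 * qW y := by
    intro y i j hadj
    have h1 := inner_gW_self G y
    have h2 : ‖y i + y j‖^2 ≤ ∑ i', ∑ j' ∈ G.neighborFinset i', ‖y i' + y j'‖^2 := by
      have h3 : ∀ i' ∈ (Finset.univ : Finset (Fin n)),
          (0:ℝ) ≤ ∑ j' ∈ G.neighborFinset i', ‖y i' + y j'‖^2 :=
        fun i' _ => Finset.sum_nonneg fun j' _ => sq_nonneg _
      have h4 := Finset.single_le_sum h3 (Finset.mem_univ i)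
      have h5 : ∀ j' ∈ G.neighborFinset i, (0:ℝ) ≤ ‖y i + y j'‖^2 := fun j' _ => sq_nonneg _
      have h6 := Finset.single_le_sum h5 ((SimpleGraph.mem_neighborFinset G i j).mpr hadj)
      linarith
    have h7 : c * ‖y i + y j‖^2 ≤ c * ∑ i', ∑ j' ∈ G.neighborFinset i', ‖y i' + y j'‖^2 :=
      mul_le_mul_of_nonneg_left h2 hc.le
    have h8 : c * ∑ i', ∑ j' ∈ G.neighborFinset i', ‖y i' + y j'‖^2 = 2 * qW y := by
      rw [← h1]
      simp only [hqWdef]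
      ring
    linarith
  have hedgeS : ∀ i j, G.Adj i j → Tendsto (fun k => ‖S (k+1) i - S (k+1) j‖) atTop (𝓝 0) := by
    intro i j hadj
    apply hsq0 _ (fun k => norm_nonneg _)
    have hb : ∀ k, ‖S (k+1) i - S (k+1) j‖^2 ≤ (2/c) * qL (S (k+1) - diagX n p z₀) := by
      intro k
      have h1 := hedgeLq (S (k+1) - diagX n p z₀) i j hadj
      have h2 : (S (k+1) - diagX n p z₀) i - (S (k+1) - diagX n p z₀) j
          = S (k+1) i - S (k+1) j := by
        show S (k+1) i - z₀ - (S (k+1) j - z₀) = S (k+1) i - S (k+1) j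
        abel
      rw [h2] at h1
      rw [div_mul_eq_mul_div, le_div_iff₀ hc]
      linarith
    have hlim : Tendsto (fun k => (2/c) * qL (S (k+1) - diagX n p z₀)) atTop (𝓝 0) := by
      have := hγ0.const_mul (2/c)
      simpa using this
    exact squeeze_zero (fun k => sq_nonneg _) hb hlim
  have hedgeD : ∀ i j, G.Adj i j →
      Tendsto (fun k => ‖(S (k+1) i - S k i) + (S (k+1) j - S k j)‖) atTop (𝓝 0) := by
    intro i j hadj
    apply hsq0 _ (fun k => norm_nonneg _)
    have hb : ∀ k, ‖(S (k+1) i - S k i) + (S (k+1) j - S k j)‖^2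
        ≤ (2/c) * qW (S (k+1) - S k) := by
      intro k
      have h1 := hedgeWq (S (k+1) - S k) i j hadj
      have h2 : (S (k+1) - S k) i + (S (k+1) - S k) j
          = (S (k+1) i - S k i) + (S (k+1) j - S k j) := rfl
      rw [h2] at h1
      rw [div_mul_eq_mul_div, le_div_iff₀ hc]
      linarith
    have hlim : Tendsto (fun k => (2/c) * qW (S (k+1) - S k)) atTop (𝓝 0) := by
      have := hd0.const_mul (2/c)
      simpa using this
    exact squeeze_zero (fun k => sq_nonneg _) hb hlim
  -- Δ k → 0 componentwise
  have hΔ : ∀ i, Tendsto (fun k => ‖S (k+1) i - S k i‖) atTop (𝓝 0) := by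
    intro i
    obtain ⟨j, hj⟩ := hNbr i
    have hadj : G.Adj i j := (SimpleGraph.mem_neighborFinset G i j).mp hj
    have h1 := hedgeD i j hadj
    have h2 := hedgeS i j hadj
    have h3 : Tendsto (fun k => ‖S k i - S k j‖) atTop (𝓝 0) :=
      (tendsto_add_atTop_iff_nat 1).mp h2
    have hb : ∀ k, ‖S (k+1) i - S k i‖
        ≤ 2⁻¹ * (‖(S (k+1) i - S k i) + (S (k+1) j - S k j)‖
          + ‖S (k+1) i - S (k+1) j‖ + ‖S k i - S k j‖) := by
      intro k
      have hid : (2:ℝ) • (S (k+1) i - S k i)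
          = ((S (k+1) i - S k i) + (S (k+1) j - S k j)) + (S (k+1) i - S (k+1) j)
            - (S k i - S k j) := by
        rw [two_smul]; abel
      have h4 : (2:ℝ) * ‖S (k+1) i - S k i‖
          = ‖((S (k+1) i - S k i) + (S (k+1) j - S k j)) + (S (k+1) i - S (k+1) j)
            - (S k i - S k j)‖ := by
        rw [← hid, norm_smul, Real.norm_eq_abs]
        norm_num
      have h5 : ‖((S (k+1) i - S k i) + (S (k+1) j - S k j)) + (S (k+1) i - S (k+1) j)
            - (S k i - S k j)‖
          ≤ ‖(S (k+1) i - S k i) + (S (k+1) j - S k j)‖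
            + ‖S (k+1) i - S (k+1) j‖ + ‖S k i - S k j‖ := by
        calc ‖((S (k+1) i - S k i) + (S (k+1) j - S k j)) + (S (k+1) i - S (k+1) j)
            - (S k i - S k j)‖
            ≤ ‖((S (k+1) i - S k i) + (S (k+1) j - S k j)) + (S (k+1) i - S (k+1) j)‖
              + ‖S k i - S k j‖ := norm_sub_le _ _
        _ ≤ ‖(S (k+1) i - S k i) + (S (k+1) j - S k j)‖ + ‖S (k+1) i - S (k+1) j‖
              + ‖S k i - S k j‖ := by
            have := norm_add_le ((S (k+1) i - S k i) + (S (k+1) j - S k j))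
              (S (k+1) i - S (k+1) j)
            linarith
      linarith
    have hlim : Tendsto (fun k => 2⁻¹ * (‖(S (k+1) i - S k i) + (S (k+1) j - S k j)‖
        + ‖S (k+1) i - S (k+1) j‖ + ‖S k i - S k j‖)) atTop (𝓝 0) := by
      have := ((h1.add h2).add h3).const_mul (2⁻¹ : ℝ)
      simpa using this
    exact squeeze_zero (fun k => norm_nonneg _) hb hlim
  -- limit variational inequality
  have hVIhat : ∀ i (w : EuclideanSpace ℝ (Fin p)),
      f i (Shat i) ≤ f i w + (inner ℝ (Vhat i) (w - Shat i) : ℝ) := by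
    intro i w
    have hficont : Continuous (f i) := (hconv i).locallyLipschitz.continuous
    have hScomp := hcompt _ _ hS1 i
    have hVcomp := hcompt _ _ hV1 i
    have hgWcomp : Tendsto (fun m => (c • gW G (S (φ m + 1) - S (φ m))) i) atTop (𝓝 0) := by
      apply squeeze_zero_norm (a := fun m => c * ∑ j ∈ G.neighborFinset i,
        (‖S (φ m + 1) i - S (φ m) i‖ + ‖S (φ m + 1) j - S (φ m) j‖))
      · intro m
        have h1 : (c • gW G (S (φ m + 1) - S (φ m))) i
            = c • ∑ j ∈ G.neighborFinset i,
              ((S (φ m + 1) i - S (φ m) i) + (S (φ m + 1) j - S (φ m) j)) := rfl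
        rw [h1, norm_smul, Real.norm_eq_abs, abs_of_pos hc]
        have h2 : ‖∑ j ∈ G.neighborFinset i,
            ((S (φ m + 1) i - S (φ m) i) + (S (φ m + 1) j - S (φ m) j))‖
            ≤ ∑ j ∈ G.neighborFinset i,
              (‖S (φ m + 1) i - S (φ m) i‖ + ‖S (φ m + 1) j - S (φ m) j‖) := by
          calc ‖∑ j ∈ G.neighborFinset i,
              ((S (φ m + 1) i - S (φ m) i) + (S (φ m + 1) j - S (φ m) j))‖
              ≤ ∑ j ∈ G.neighborFinset i,
                ‖(S (φ m + 1) i - S (φ m) i) + (S (φ m + 1) j - S (φ m) j)‖ :=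
              norm_sum_le _ _
          _ ≤ _ := Finset.sum_le_sum fun j _ => norm_add_le _ _
        exact mul_le_mul_of_nonneg_left h2 hc.le
      · have h3 : Tendsto (fun m => ∑ j ∈ G.neighborFinset i,
            (‖S (φ m + 1) i - S (φ m) i‖ + ‖S (φ m + 1) j - S (φ m) j‖)) atTop (𝓝 0) := by
          have h4 : ∀ j : Fin n, Tendsto (fun m => ‖S (φ m + 1) j - S (φ m) j‖) atTop (𝓝 0) :=
            fun j => (hΔ j).comp hφ.tendsto_atTop
          have h5 := tendsto_finset_sum (G.neighborFinset i)
            (fun j (_ : j ∈ G.neighborFinset i) => (h4 i).add (h4 j))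
          simpa using h5
        have := h3.const_mul c
        simpa using this
    have h1 : Tendsto (fun m => v (φ m + 1) i + (c • gW G (S (φ m + 1) - S (φ m))) i)
        atTop (𝓝 (Vhat i)) := by
      have := hVcomp.add hgWcomp
      simpa using this
    have h2 : Tendsto (fun m => w - S (φ m + 1) i) atTop (𝓝 (w - Shat i)) :=
      tendsto_const_nhds.sub hScomp
    have h3 : Tendsto (fun m => f i w + (inner ℝ (v (φ m + 1) i
        + (c • gW G (S (φ m + 1) - S (φ m))) i) (w - S (φ m + 1) i) : ℝ)) atTop
        (𝓝 (f i w + (inner ℝ (Vhat i) (w - Shat i) : ℝ))) :=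
      tendsto_const_nhds.add (h1.inner h2)
    have h4 : Tendsto (fun m => f i (S (φ m + 1) i)) atTop (𝓝 (f i (Shat i))) :=
      (hficont.tendsto _).comp hScomp
    have h5 : ∀ m, f i (S (φ m + 1) i) ≤ f i w + (inner ℝ (v (φ m + 1) i
        + (c • gW G (S (φ m + 1) - S (φ m))) i) (w - S (φ m + 1) i) : ℝ) := by
      intro m
      have h := hVI (φ m) i w
      rw [hQ (φ m) i] at h
      exact h
    exact le_of_tendsto_of_tendsto' h4 h3 h5
  -- the cluster point is a consensus vector
  have hcons : ∀ i j, Shat i = Shat j := by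
    have hadjcons : ∀ i j, G.Adj i j → Shat i = Shat j := by
      intro i j hadj
      have h1 : Tendsto (fun m => ‖S (φ m + 1) i - S (φ m + 1) j‖) atTop
          (𝓝 ‖Shat i - Shat j‖) := ((hcompt _ _ hS1 i).sub (hcompt _ _ hS1 j)).norm
      have h2 : Tendsto (fun m => ‖S (φ m + 1) i - S (φ m + 1) j‖) atTop (𝓝 0) :=
        (hedgeS i j hadj).comp hφ.tendsto_atTop
      have h3 := tendsto_nhds_unique h1 h2
      rw [norm_eq_zero, sub_eq_zero] at h3
      exact h3
    intro i j
    obtain ⟨wk⟩ := hG.preconnected i j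
    induction wk with
    | nil => rfl
    | cons h w ih => exact (hadjcons _ _ h).trans ih
  set shat := Shat ⟨0, by omega⟩ with hshatdef
  have hShat : Shat = diagX n p shat := by
    refine PiLp.ext fun i => ?_
    rw [diagX_apply]
    exact hcons i _
  have hVhatsum : ∑ i, Vhat i = 0 := by
    have h1 : Tendsto (fun m => ∑ i, V (φ m + 1) i) atTop (𝓝 (∑ i, Vhat i)) :=
      tendsto_finset_sum _ (fun i _ => hcompt _ _ hV1 i)
    have h2 : (fun m => ∑ i, V (φ m + 1) i) = fun _ => (0 : EuclideanSpace ℝ (Fin p)) :=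
      funext fun m => hVsum0 _
    rw [h2] at h1
    exact tendsto_nhds_unique h1 tendsto_const_nhds
  -- shat is a minimizer
  have hminhat : ∀ w, ∑ i, f i shat ≤ ∑ i, f i w := by
    intro w
    have h1 : ∀ i, f i shat ≤ f i w + (inner ℝ (Vhat i) (w - shat) : ℝ) := by
      intro i
      have h2 := hVIhat i w
      have h3 : Shat i = shat := (hcons i ⟨0, by omega⟩).trans hshatdef.symm
      rwa [h3] at h2
    have h4 := Finset.sum_le_sum (fun i (_ : i ∈ Finset.univ) => h1 i)
    rw [Finset.sum_add_distrib] at h4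
    have h5 : ∑ i, (inner ℝ (Vhat i) (w - shat) : ℝ) = 0 := by
      rw [← sum_inner, hVhatsum, inner_zero_left]
    linarith
  -- phase 2 certificate
  have hsadhat : ∃ uhat : XSp n p, c • gL G uhat = Vhat ∧
      ∀ w : XSp n p, F (diagX n p shat) ≤ F w + (inner ℝ (c • gL G uhat) (w - diagX n p shat) : ℝ) := by
    obtain ⟨u', hu'⟩ := gL_surj G hG (by omega : 0 < n) ((c⁻¹ : ℝ) • Vhat) (by
      have h5 : ∑ i, ((c⁻¹ : ℝ) • Vhat) i = ∑ i, (c⁻¹ : ℝ) • Vhat i :=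
        Finset.sum_congr rfl fun i _ => rfl
      rw [h5, ← Finset.smul_sum, hVhatsum, smul_zero])
    have hgl : c • gL G u' = Vhat := by
      rw [hu', smul_smul, mul_inv_cancel₀ hc.ne', one_smul]
    refine ⟨u', hgl, fun w => ?_⟩
    have h1 : ∀ i, f i shat ≤ f i (w i) + (inner ℝ (Vhat i) (w i - shat) : ℝ) := by
      intro i
      have h2 := hVIhat i (w i)
      have h3 : Shat i = shat := (hcons i ⟨0, by omega⟩).trans hshatdef.symm
      rwa [h3] at h2
    have h4 := Finset.sum_le_sum (fun i (_ : i ∈ Finset.univ) => h1 i)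
    rw [Finset.sum_add_distrib] at h4
    have h6 : (inner ℝ (c • gL G u') (w - diagX n p shat) : ℝ)
        = ∑ i, (inner ℝ (Vhat i) (w i - shat) : ℝ) := by
      rw [hgl, PiLp.inner_apply]
      exact Finset.sum_congr rfl fun i _ => rfl
    have h7 : F (diagX n p shat) = ∑ i, f i shat := rfl
    have h8 : F w = ∑ i, f i (w i) := rfl
    rw [h7, h8, h6]
    linarith
  obtain ⟨uhat, hgLuhat, hsadhat⟩ := hsadhat
  have hmas1 := hmaster shat uhat hsadhat
  set Wf : ℕ → ℝ := fun k => qL (R k - uhat) + qW (S k - diagX n p shat) with hWfdef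
  have hWsub : Tendsto (fun m => Wf (φ m + 1)) atTop (𝓝 0) := by
    obtain ⟨CL, hCLpos, hCL⟩ := psd_gap (gL G (p := p)) (gL_symm G) (gL_psd G)
    have hqWpart : Tendsto (fun m => qW (S (φ m + 1) - diagX n p shat)) atTop (𝓝 0) := by
      have hy : Tendsto (fun m => S (φ m + 1) - diagX n p shat) atTop
          (𝓝 (Shat - diagX n p shat)) := hS1.sub tendsto_const_nhds
      have hy0 : Shat - diagX n p shat = 0 := by rw [hShat]; exact sub_self _
      rw [hy0] at hy
      have hqWc : Continuous qW := by
        simp only [hqWdef]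
        set_option synthInstance.maxHeartbeats 400000 in
        exact continuous_const.mul
          (Continuous.inner (gW G).continuous_of_finiteDimensional continuous_id)
      have h0 : qW 0 = 0 := by
        simp only [hqWdef]
        rw [map_zero, inner_zero_left, mul_zero]
      have := (hqWc.tendsto 0).comp hy
      rwa [h0] at this
    have hkey : ∀ k, qL (R k - uhat) ≤ (CL / c) * ‖V k - Vhat‖^2 := by
      intro k
      have h1 : V k - Vhat = c • gL G (R k - uhat) := by
        rw [hrv k, ← hgLuhat, ← smul_sub, ← map_sub]
      have h2 := hCL (R k - uhat)
      have h3 : ‖V k - Vhat‖^2 = c^2 * ‖gL G (R k - uhat)‖^2 := by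
        rw [h1, norm_smul, mul_pow, Real.norm_eq_abs, sq_abs]
      have h4 : qL (R k - uhat) = c * (inner ℝ (gL G (R k - uhat)) (R k - uhat) : ℝ) := rfl
      rw [h4, h3]
      have h5 := mul_le_mul_of_nonneg_left h2 hc.le
      calc c * (inner ℝ (gL G (R k - uhat)) (R k - uhat) : ℝ)
          ≤ c * (CL * ‖gL G (R k - uhat)‖^2) := h5
      _ = (CL / c) * (c^2 * ‖gL G (R k - uhat)‖^2) := by
          field_simp
    have hqLpart : Tendsto (fun m => qL (R (φ m + 1) - uhat)) atTop (𝓝 0) := by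
      have hVn : Tendsto (fun m => ‖V (φ m + 1) - Vhat‖) atTop (𝓝 0) := by
        rwa [tendsto_iff_norm_sub_tendsto_zero] at hV1
      have hVnsq : Tendsto (fun m => ‖V (φ m + 1) - Vhat‖^2) atTop (𝓝 0) := by
        have := hVn.mul hVn
        simpa [sq] using this
      refine squeeze_zero (fun m => hqLnn _) (fun m => hkey _) ?_
      have := hVnsq.const_mul (CL / c)
      simpa using this
    have := hqLpart.add hqWpart
    simpa using this
  have hWall : Tendsto Wf atTop (𝓝 0) := by
    have hnn : ∀ k, 0 ≤ Wf k := fun k => add_nonneg (hqLnn _) (hqWnn _)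
    have hmonoW := hmono shat uhat hmas1
    have hψ : StrictMono (fun m => φ m + 1) := fun a b hab => by
      have h0 := hφ hab
      show φ a + 1 < φ b + 1
      omega
    exact tendsto_zero_of_antitone_of_subseq (fun k l hkl => hmonoW k l hkl) hnn _ hψ hWsub
  have hγhat : Tendsto (fun k => qL (S (k+1) - diagX n p shat)) atTop (𝓝 0) := by
    refine squeeze_zero (fun k => hqLnn _) (fun k => ?_) (htend0 shat uhat hmas1)
    have := hqWnn (S (k+1) - S k)
    linarith
  -- primal convergence
  have hprim : ∀ i, Tendsto (fun k => s k i) atTop (𝓝 shat) := by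
    intro i
    have hb : ∀ k, ‖(S (k+1) - diagX n p shat) i‖^2
        ≤ (2*c)⁻¹ * (qL (S (k+1) - diagX n p shat) + qW (S (k+1) - diagX n p shat)) := by
      intro k
      have h1 := hcompb (S (k+1) - diagX n p shat) i
      rw [inv_mul_eq_div, le_div_iff₀ (by positivity)]
      linarith
    have h2 : Tendsto (fun k => qW (S (k+1) - diagX n p shat)) atTop (𝓝 0) := by
      refine squeeze_zero (fun k => hqWnn _) (fun k => ?_) (hWall.comp (tendsto_add_atTop_nat 1))
      have h3 := hqLnn (R (k+1) - uhat)
      show qW (S (k+1) - diagX n p shat) ≤ Wf (k+1)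
      simp only [hWfdef]
      linarith
    have hlim : Tendsto (fun k => (2*c)⁻¹ * (qL (S (k+1) - diagX n p shat)
        + qW (S (k+1) - diagX n p shat))) atTop (𝓝 0) := by
      have := (hγhat.add h2).const_mul ((2*c)⁻¹ : ℝ)
      simpa using this
    have hnormsq := squeeze_zero (fun k => sq_nonneg _) hb hlim
    have hnorm := hsq0 _ (fun k => norm_nonneg _) hnormsq
    have h4 : Tendsto (fun k => S (k+1) i) atTop (𝓝 shat) := by
      rw [tendsto_iff_norm_sub_tendsto_zero]
      exact hnorm
    exact (tendsto_add_atTop_iff_nat 1).mp h4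
  -- dual convergence
  have hdual : ∀ i, Tendsto (fun k => v k i) atTop (𝓝 (Vhat i)) := by
    intro i
    obtain ⟨ML, hMLpos, hML⟩ := psd_norm_sq_le (gL G (p := p)) (gL_symm G) (gL_psd G)
    have hkey : ∀ k, ‖V k - Vhat‖^2 ≤ (c * ML) * Wf k := by
      intro k
      have h1 : V k - Vhat = c • gL G (R k - uhat) := by
        rw [hrv k, ← hgLuhat, ← smul_sub, ← map_sub]
      have h2 : ‖V k - Vhat‖^2 = c^2 * ‖gL G (R k - uhat)‖^2 := by
        rw [h1, norm_smul, mul_pow, Real.norm_eq_abs, sq_abs]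
      have h3 := hML (R k - uhat)
      have h4 : qL (R k - uhat) ≤ Wf k := by
        simp only [hWfdef]
        have := hqWnn (S k - diagX n p shat)
        linarith
      have h5 : c^2 * ‖gL G (R k - uhat)‖^2
          ≤ c^2 * (ML * (inner ℝ (gL G (R k - uhat)) (R k - uhat) : ℝ)) :=
        mul_le_mul_of_nonneg_left h3 (sq_nonneg c)
      have h6 : qL (R k - uhat) = c * (inner ℝ (gL G (R k - uhat)) (R k - uhat) : ℝ) := rfl
      rw [h6] at h4
      have h8 : (c * ML) * (c * (inner ℝ (gL G (R k - uhat)) (R k - uhat) : ℝ))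
          ≤ (c * ML) * Wf k :=
        mul_le_mul_of_nonneg_left h4 (by positivity)
      have h9 : c^2 * (ML * (inner ℝ (gL G (R k - uhat)) (R k - uhat) : ℝ))
          = (c * ML) * (c * (inner ℝ (gL G (R k - uhat)) (R k - uhat) : ℝ)) := by ring
      rw [h2]
      linarith
    have hnormsq : Tendsto (fun k => ‖V k - Vhat‖^2) atTop (𝓝 0) := by
      refine squeeze_zero (fun k => sq_nonneg _) hkey ?_
      have := hWall.const_mul (c * ML)
      simpa using this
    have hnorm := hsq0 _ (fun k => norm_nonneg _) hnormsq
    have hVg : Tendsto V atTop (𝓝 Vhat) := by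
      rw [tendsto_iff_norm_sub_tendsto_zero]
      exact hnorm
    exact hcompt V Vhat hVg i
  exact ⟨shat, hminhat, hprim, fun i => ⟨Vhat i, hdual i⟩⟩
end

section
/- Let H ∈ ℝ^{d×d} be symmetric positive semidefinite and write ‖x‖_H² := xᵀ H x for x ∈ ℝ^d. Let u : ℕ → ℝ^d and u* ∈ ℝ^d satisfy, for all k ≥ 0: (i) ‖u(k+1) − u*‖_H² ≤ ‖u(k) − u*‖_H² − ‖u(k+1) − u(k)‖_H² (monotone contraction toward u*), and (ii) ‖u(k+2) − u(k+1)‖_H² ≤ ‖u(k+1) − u(k)‖_H² (non-increasing successive differences). Then for every k ≥ 0, ‖u(k+1) − u(k)‖_H² ≤ (1/(k+1)) ‖u(0) − u*‖_H², i.e., the successive differences vanish at a non-ergodic O(1/k) rate. -/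
open Matrix

/-- The squared seminorm induced by a positive semidefinite matrix `H`:
`‖x‖_H² = xᵀ H x`. -/
def hNormSq {d : ℕ} (H : Matrix (Fin d) (Fin d) ℝ) (x : Fin d → ℝ) : ℝ :=
  x ⬝ᵥ H.mulVec x

lemma hNormSq_nonneg {d : ℕ} {H : Matrix (Fin d) (Fin d) ℝ} (hH : H.PosSemidef)
    (x : Fin d → ℝ) : 0 ≤ hNormSq H x := by
  have := hH.dotProduct_mulVec_nonneg x
  simpa [hNormSq, Matrix.dotProduct_mulVec] using this

/-- Non-ergodic O(1/k) rate: if `‖u(k+1) - u*‖_H² ≤ ‖u(k) - u*‖_H² - ‖u(k+1) - u(k)‖_H²`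
and the successive differences `‖u(k+1) - u(k)‖_H²` are non-increasing, then
`‖u(k+1) - u(k)‖_H² ≤ (1/(k+1)) ‖u(0) - u*‖_H²` for every `k`. -/
theorem admm_nonergodic_rate
    (d : ℕ) (H : Matrix (Fin d) (Fin d) ℝ) (hH : H.PosSemidef)
    (u : ℕ → Fin d → ℝ) (ustar : Fin d → ℝ)
    (hcontr : ∀ k : ℕ,
      hNormSq H (u (k + 1) - ustar)
        ≤ hNormSq H (u k - ustar) - hNormSq H (u (k + 1) - u k))
    (hmono : ∀ k : ℕ,
      hNormSq H (u (k + 2) - u (k + 1)) ≤ hNormSq H (u (k + 1) - u k)) :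
    ∀ k : ℕ,
      hNormSq H (u (k + 1) - u k) ≤ (1 / (k + 1 : ℝ)) * hNormSq H (u 0 - ustar) := by
  intro k
  set e : ℕ → ℝ := fun i => hNormSq H (u (i + 1) - u i) with he
  -- e is antitone on successive steps, hence e k ≤ e i for i ≤ k
  have hstep : ∀ i j : ℕ, i ≤ j → e j ≤ e i := by
    intro i j hij
    induction j with
    | zero => simp_all
    | succ n ih =>
      rcases Nat.lt_or_ge i (n+1) with h | h
      · exact le_trans (hmono n) (ih (Nat.lt_succ_iff.mp h))
      · have : i = n + 1 := le_antisymm hij h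
        simp [this]
  -- sum bound
  have hsum : ∀ n : ℕ, (Finset.range (n+1)).sum e ≤ hNormSq H (u 0 - ustar) := by
    intro n
    have key : ∀ n : ℕ, (Finset.range (n+1)).sum e
        ≤ hNormSq H (u 0 - ustar) - hNormSq H (u (n+1) - ustar) := by
      intro n
      induction n with
      | zero =>
        have := hcontr 0
        have h0 : (Finset.range 1).sum e = e 0 := Finset.sum_range_one e
        rw [h0]
        linarith
      | succ m ih =>
        rw [Finset.sum_range_succ]
        have := hcontr (m + 1)
        linarith
    have := key n
    have h2 := hNormSq_nonneg hH (u (n+1) - ustar)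
    linarith
  have hk1 : (0:ℝ) < (k:ℝ) + 1 := by positivity
  rw [div_mul_eq_mul_div, one_mul, le_div_iff₀ hk1]
  have : ((k:ℝ) + 1) * e k ≤ (Finset.range (k+1)).sum e := by
    have : ∀ i ∈ Finset.range (k+1), e k ≤ e i := fun i hi =>
      hstep i k (Nat.lt_succ_iff.mp (Finset.mem_range.mp hi))
    calc ((k:ℝ) + 1) * e k = (Finset.range (k+1)).sum (fun _ => e k) := by
          rw [Finset.sum_const, Finset.card_range]; push_cast; ring
      _ ≤ (Finset.range (k+1)).sum e := Finset.sum_le_sum this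
  calc hNormSq H (u (k + 1) - u k) * ((k:ℝ) + 1) = ((k:ℝ) + 1) * e k := by ring
    _ ≤ (Finset.range (k+1)).sum e := this
    _ ≤ _ := hsum k
end

section
/- Let m, M, γ, Γ be positive reals (representing the strong convexity constant m = m_f and gradient Lipschitz constant M = M_f of the aggregate cost, and the smallest nonzero eigenvalue γ = γ_o of the oriented Laplacian and largest eigenvalue Γ = Γ_u of the unoriented Laplacian). For μ > 1 and c > 0 define F(μ, c) := min { (μ−1)γ/(μΓ), 2 c m γ/(c² Γ γ + μ M²) }. Let μ* > 1 be defined by 1/√μ* = √( (m²/(4M²))(Γ/γ) + 1 ) − (m/(2M))√(Γ/γ), and let c* := M √(μ*/(Γ γ)). Then F(μ*, c*) = (m/M)·( √( m²/(4M²) + γ/Γ ) − m/(2M) ), and for all μ > 1 and c > 0, F(μ, c) ≤ (m/M)·( √( m²/(4M²) + γ/Γ ) − m/(2M) ); that is, the choices μ*, c* maximize the contraction parameter δ = F(μ,c) and the maximal value is δ = (m/M)[ √( m²/(4M²) + γ/Γ ) − m/(2M) ]. -/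
private lemma admm_aux_mono (γ Γ μ ν : ℝ) (hγ : 0 < γ) (hΓ : 0 < Γ)
    (hμ : 0 < μ) (hle : μ ≤ ν) :
    (μ - 1) * γ / (μ * Γ) ≤ (ν - 1) * γ / (ν * Γ) := by
  have hν : 0 < ν := lt_of_lt_of_le hμ hle
  rw [div_le_div_iff₀ (by positivity) (by positivity)]
  nlinarith [mul_nonneg (mul_nonneg hγ.le hΓ.le) (sub_nonneg.mpr hle)]

private lemma admm_aux_amgm (c N p r : ℝ) :
    2 * c * N * (p * r) ≤ c ^ 2 * r ^ 2 + p ^ 2 * N ^ 2 := by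
  nlinarith [sq_nonneg (c * r - N * p)]

set_option maxHeartbeats 1000000 in
/-- Optimal tuning of the ADMM contraction parameter: with
`F(μ, c) = min { (μ-1)γ/(μΓ), 2cmγ/(c²Γγ + μM²) }`, the choices
`μ*` (defined by `1/√μ* = √((m²/(4M²))(Γ/γ) + 1) - (m/(2M))√(Γ/γ)`) and
`c* = M √(μ*/(Γγ))` maximize `F` over `μ > 1`, `c > 0`, and the maximum is
`δ = (m/M)(√(m²/(4M²) + γ/Γ) - m/(2M))`. -/
theorem admm_optimal_contraction_parameter
    (m M γ Γ : ℝ) (hm : 0 < m) (hM : 0 < M) (hγ : 0 < γ) (hΓ : 0 < Γ)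
    (F : ℝ → ℝ → ℝ)
    (hF : ∀ μ c : ℝ,
      F μ c = min ((μ - 1) * γ / (μ * Γ))
                  (2 * c * m * γ / (c ^ 2 * Γ * γ + μ * M ^ 2)))
    (μstar : ℝ) (hμstar1 : 1 < μstar)
    (hμstar : 1 / Real.sqrt μstar
      = Real.sqrt ((m ^ 2 / (4 * M ^ 2)) * (Γ / γ) + 1)
        - (m / (2 * M)) * Real.sqrt (Γ / γ))
    (cstar : ℝ) (hcstar : cstar = M * Real.sqrt (μstar / (Γ * γ))) :
    F μstar cstar
      = (m / M) * (Real.sqrt (m ^ 2 / (4 * M ^ 2) + γ / Γ) - m / (2 * M)) ∧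
    ∀ μ c : ℝ, 1 < μ → 0 < c →
      F μ c ≤ (m / M) * (Real.sqrt (m ^ 2 / (4 * M ^ 2) + γ / Γ) - m / (2 * M)) := by
  have hμpos : 0 < μstar := lt_trans one_pos hμstar1
  set s := Real.sqrt (γ / Γ) with hs
  set u := Real.sqrt (Γ / γ) with hu
  have hspos : 0 < s := Real.sqrt_pos.mpr (by positivity)
  have hupos : 0 < u := Real.sqrt_pos.mpr (by positivity)
  have hs2 : s ^ 2 = γ / Γ := Real.sq_sqrt (by positivity)
  have hu2 : u ^ 2 = Γ / γ := Real.sq_sqrt (by positivity)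
  have hsu : s * u = 1 := by
    rw [hs, hu, ← Real.sqrt_mul (by positivity),
      show γ / Γ * (Γ / γ) = 1 by field_simp, Real.sqrt_one]
  set t := m / (2 * M) * u with ht
  have htpos : 0 < t := by positivity
  have ht2 : t ^ 2 = m ^ 2 / (4 * M ^ 2) * (Γ / γ) := by
    rw [ht, mul_pow, hu2]; ring
  set q := Real.sqrt μstar with hq
  have hqpos : 0 < q := Real.sqrt_pos.mpr hμpos
  have hq2 : q ^ 2 = μstar := Real.sq_sqrt hμpos.le
  set x := 1 / q with hxdef
  have hxpos : 0 < x := by positivity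
  have hx2 : μstar * x ^ 2 = 1 := by
    rw [hxdef, div_pow, one_pow, ← hq2]; field_simp
  have hxval : x = Real.sqrt (t ^ 2 + 1) - t := by
    rw [hμstar, ht2]
  have hxx : x * (x + 2 * t) = 1 := by
    have h1 : Real.sqrt (t ^ 2 + 1) ^ 2 = t ^ 2 + 1 := Real.sq_sqrt (by positivity)
    rw [hxval]; nlinarith [h1]
  have hst : s * t = m / (2 * M) := by
    rw [ht, show s * (m / (2 * M) * u) = m / (2 * M) * (s * u) by ring, hsu, mul_one]
  have hγ' : γ = s ^ 2 * Γ := by rw [hs2]; field_simp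
  have hsqrtsplit : Real.sqrt (m ^ 2 / (4 * M ^ 2) + γ / Γ) = s * Real.sqrt (t ^ 2 + 1) := by
    rw [hs, ← Real.sqrt_mul (by positivity)]
    congr 1
    rw [ht2]; field_simp
  have hδ : (m / M) * (Real.sqrt (m ^ 2 / (4 * M ^ 2) + γ / Γ) - m / (2 * M))
      = m / M * s * x := by
    rw [hsqrtsplit, ← hst, hxval]; ring
  have hm' : m = 2 * M * (s * t) := by rw [hst]; field_simp
  -- first term at μstar
  have hA : (μstar - 1) * γ / (μstar * Γ) = m / M * s * x := by
    rw [div_eq_iff (by positivity)]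
    have h2tx : 2 * t * x * μstar = μstar - 1 := by
      linear_combination μstar * hxx - hx2
    linear_combination (-(s ^ 2 * Γ)) * h2tx + (μstar - 1) * hγ'
      + (2 * s * x * μstar * Γ) * hst
  -- the square root of Γ*γ
  set r := Real.sqrt (Γ * γ) with hr
  have hrpos : 0 < r := Real.sqrt_pos.mpr (by positivity)
  have hr2 : r ^ 2 = Γ * γ := Real.sq_sqrt (by positivity)
  have hγr : γ = s * r := by
    have : s * r = γ := by
      rw [hs, hr, ← Real.sqrt_mul (by positivity),
        show γ / Γ * (Γ * γ) = γ ^ 2 by field_simp, Real.sqrt_sq hγ.le]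
    linarith
  have hcstar' : cstar = M * q / r := by
    rw [hcstar, Real.sqrt_div hμpos.le, ← hq, ← hr, mul_div_assoc]
  have hB : 2 * cstar * m * γ / (cstar ^ 2 * Γ * γ + μstar * M ^ 2) = m / M * s * x := by
    have hden : cstar ^ 2 * Γ * γ + μstar * M ^ 2 = 2 * (μstar * M ^ 2) := by
      rw [hcstar', div_pow, mul_pow, hr2, ← hq2]; field_simp; ring
    rw [hden, div_eq_iff (by positivity), hcstar', hxdef, hγr, ← hq2]
    field_simp
  clear_value s u t q x r
  refine ⟨?_, ?_⟩
  · rw [hF, hA, hB, min_self, hδ]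
  · intro μ c hμ1 hc
    rw [hF, hδ]
    rcases le_total μ μstar with hle | hle
    · refine le_trans (min_le_left _ _) ?_
      rw [← hA]
      exact admm_aux_mono γ Γ μ μstar hγ hΓ (by linarith) hle
    · refine le_trans (min_le_right _ _) ?_
      set p := Real.sqrt μ with hp
      have hppos : 0 < p := Real.sqrt_pos.mpr (by linarith)
      have hp2 : p ^ 2 = μ := Real.sq_sqrt (by linarith)
      have hqp : q ≤ p := by
        rw [hq, hp]; exact Real.sqrt_le_sqrt hle
      have hdenlb : 2 * c * M * (p * r) ≤ c ^ 2 * Γ * γ + μ * M ^ 2 := by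
        have h1 := admm_aux_amgm c M p r
        have h2 : c ^ 2 * r ^ 2 + p ^ 2 * M ^ 2 = c ^ 2 * Γ * γ + μ * M ^ 2 := by
          rw [hr2, hp2]; ring
        linarith
      have hdenpos : 0 < 2 * c * M * (p * r) := by positivity
      have step1 : 2 * c * m * γ / (c ^ 2 * Γ * γ + μ * M ^ 2)
          ≤ 2 * c * m * γ / (2 * c * M * (p * r)) := by
        have hnum : 0 ≤ 2 * c * m * γ := by positivity
        exact div_le_div_of_nonneg_left hnum hdenpos hdenlb
      refine le_trans step1 ?_
      have step2 : 2 * c * m * γ / (2 * c * M * (p * r)) = m / M * s * (1 / p) := by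
        rw [hγr]; field_simp
      rw [step2]
      have : (1:ℝ) / p ≤ 1 / q := by
        apply one_div_le_one_div_of_le hqpos hqp
      calc m / M * s * (1 / p) ≤ m / M * s * (1 / q) := by
            apply mul_le_mul_of_nonneg_left this (by positivity)
        _ = m / M * s * x := by rw [hxdef]
end

section
/- Let X ∈ ℝ^{L×T} and let ρ ∈ ℕ satisfy rank(X) ≤ ρ. Define the nuclear norm ‖X‖_* as the sum of the singular values of X (equivalently, the trace of the positive semidefinite square root of Xᵀ X). Then ‖X‖_* = min { (1/2)( ‖P‖_F² + ‖Q‖_F² ) : P ∈ ℝ^{L×ρ}, Q ∈ ℝ^{T×ρ}, X = P Qᵀ }, where ‖·‖_F is the Frobenius norm; in particular the minimum is attained, and every factorization X = P Qᵀ satisfies ‖X‖_* ≤ (1/2)( ‖P‖_F² + ‖Q‖_F² ). -/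
open Matrix

/-- The nuclear norm of a real matrix `X`: the sum of its singular values,
i.e. the trace of the positive semidefinite square root of `Xᵀ X`
(over `ℝ`, `Xᴴ = Xᵀ`). -/
noncomputable def nuclearNorm {L T : ℕ} (X : Matrix (Fin L) (Fin T) ℝ) : ℝ :=
  ((Matrix.posSemidef_conjTranspose_mul_self X).1.eigenvectorUnitary.1 *
      diagonal ((RCLike.ofReal : ℝ → ℝ) ∘ Real.sqrt ∘ (Matrix.posSemidef_conjTranspose_mul_self X).1.eigenvalues) *
      (star (Matrix.posSemidef_conjTranspose_mul_self X).1.eigenvectorUnitary : Matrix (Fin T) (Fin T) ℝ)).trace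

/-- Squared Frobenius norm of a matrix. -/
def frobSq {L T : ℕ} (A : Matrix (Fin L) (Fin T) ℝ) : ℝ :=
  ∑ i, ∑ j, (A i j) ^ 2

namespace NucAux

lemma frobSq_eq_trace {m n : ℕ} (A : Matrix (Fin m) (Fin n) ℝ) :
    frobSq A = (Aᵀ * A).trace := by
  simp only [frobSq, Matrix.trace, Matrix.diag, Matrix.mul_apply, Matrix.transpose_apply, sq]
  rw [Finset.sum_comm]

lemma frobSq_nonneg {m n : ℕ} (A : Matrix (Fin m) (Fin n) ℝ) : 0 ≤ frobSq A :=
  Finset.sum_nonneg fun _ _ => Finset.sum_nonneg fun _ _ => sq_nonneg _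

lemma trace_transpose_mul_self_nonneg {m n : ℕ} (A : Matrix (Fin m) (Fin n) ℝ) :
    0 ≤ (Aᵀ * A).trace := by
  rw [← frobSq_eq_trace]; exact frobSq_nonneg A

/-- Frobenius Cauchy–Schwarz / AM-GM. -/
lemma trace_inner_le {m n : ℕ} (A B : Matrix (Fin m) (Fin n) ℝ) :
    (Aᵀ * B).trace ≤ (1 / 2) * ((Aᵀ * A).trace + (Bᵀ * B).trace) := by
  have h := trace_transpose_mul_self_nonneg (A - B)
  have hBA : (Bᵀ * A).trace = (Aᵀ * B).trace := by
    rw [← Matrix.trace_transpose, Matrix.transpose_mul, Matrix.transpose_transpose]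
  rw [Matrix.transpose_sub, Matrix.sub_mul, Matrix.mul_sub, Matrix.mul_sub,
    Matrix.trace_sub, Matrix.trace_sub, Matrix.trace_sub, hBA] at h
  linarith

section Setup

variable {L T : ℕ} (X : Matrix (Fin L) (Fin T) ℝ)

noncomputable def lam : Fin T → ℝ :=
  (Matrix.posSemidef_conjTranspose_mul_self X).1.eigenvalues

noncomputable def Vm : Matrix (Fin T) (Fin T) ℝ :=
  (Matrix.posSemidef_conjTranspose_mul_self X).1.eigenvectorUnitary

lemma lam_nonneg (j : Fin T) : 0 ≤ lam X j :=
  (Matrix.posSemidef_conjTranspose_mul_self X).eigenvalues_nonneg j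

lemma Vt_mul_V : (Vm X)ᵀ * Vm X = 1 := by
  have := Matrix.mem_unitaryGroup_iff'.mp
    ((Matrix.posSemidef_conjTranspose_mul_self X).1.eigenvectorUnitary).2
  simpa [Vm, Matrix.star_eq_conjTranspose,
    Matrix.conjTranspose_eq_transpose_of_trivial] using this

lemma V_mul_Vt : Vm X * (Vm X)ᵀ = 1 := by
  have := Matrix.mem_unitaryGroup_iff.mp
    ((Matrix.posSemidef_conjTranspose_mul_self X).1.eigenvectorUnitary).2
  simpa [Vm, Matrix.star_eq_conjTranspose,
    Matrix.conjTranspose_eq_transpose_of_trivial] using this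

lemma spectral : (Vm X)ᵀ * (Xᵀ * X) * Vm X = diagonal (lam X) := by
  have := (Matrix.posSemidef_conjTranspose_mul_self X).1.conjStarAlgAut_star_eigenvectorUnitary
  simp only [Unitary.conjStarAlgAut_apply, Unitary.coe_star, star_star] at this
  have hXT : Xᴴ = Xᵀ := Matrix.conjTranspose_eq_transpose_of_trivial X
  simp only [hXT] at this
  simpa [Vm, lam, Matrix.star_eq_conjTranspose,
    Matrix.conjTranspose_eq_transpose_of_trivial, Function.comp] using this

/-- `Y = X * V`, whose columns are `X vⱼ`. -/
noncomputable def Y : Matrix (Fin L) (Fin T) ℝ := X * Vm X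

lemma Yt_mul_Y : (Y X)ᵀ * Y X = diagonal (lam X) := by
  rw [Y, Matrix.transpose_mul, ← spectral X, Matrix.mul_assoc, Matrix.mul_assoc,
    Matrix.mul_assoc]

lemma Y_col_zero {j : Fin T} (hj : lam X j = 0) (i : Fin L) : Y X i j = 0 := by
  have h : ((Y X)ᵀ * Y X) j j = 0 := by rw [Yt_mul_Y]; simp [hj]
  rw [Matrix.mul_apply] at h
  have := (Finset.sum_eq_zero_iff_of_nonneg (fun i _ => by
    simpa [Matrix.transpose_apply] using mul_self_nonneg (Y X i j))).mp h i (Finset.mem_univ i)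
  simpa [Matrix.transpose_apply, mul_self_eq_zero] using this

lemma Y_mul_diagonal_eq (c : Fin T → ℝ) (hc : ∀ j, lam X j ≠ 0 → c j = 1) :
    Y X * diagonal c * (Vm X)ᵀ = X := by
  have h1 : Y X * diagonal c = Y X := by
    ext i j
    rw [Matrix.mul_diagonal]
    by_cases hj : lam X j = 0
    · rw [Y_col_zero X hj, zero_mul]
    · rw [hc j hj, mul_one]
  rw [h1, Y, Matrix.mul_assoc, V_mul_Vt, Matrix.mul_one]

lemma nuclearNorm_eq_sum_sqrt : nuclearNorm X = ∑ j, Real.sqrt (lam X j) := by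
  rw [nuclearNorm, Matrix.trace_mul_cycle]
  simp [Matrix.trace_diagonal, lam, Matrix.mem_unitaryGroup_iff'.mp
      ((Matrix.posSemidef_conjTranspose_mul_self X).1.eigenvectorUnitary).2]

end Setup

end NucAux


namespace NucAux

section Lower

variable {L T ρ : ℕ} (X : Matrix (Fin L) (Fin T) ℝ)

noncomputable def iot : Fin T → ℝ := fun j => if lam X j = 0 then 0 else (Real.sqrt (lam X j))⁻¹

noncomputable def W : Matrix (Fin L) (Fin T) ℝ := Y X * diagonal (iot X)

noncomputable def chi : Fin T → ℝ := fun j => if lam X j = 0 then 0 else 1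

lemma sqrt_pos_of_ne {j : Fin T} (hj : lam X j ≠ 0) : 0 < Real.sqrt (lam X j) :=
  Real.sqrt_pos.mpr (lt_of_le_of_ne (lam_nonneg X j) (Ne.symm hj))

lemma Wt_mul_XV : (W X)ᵀ * (X * Vm X) = diagonal (fun j => Real.sqrt (lam X j)) := by
  rw [W, Matrix.transpose_mul, Matrix.diagonal_transpose, Matrix.mul_assoc, ← Y,
    Yt_mul_Y, Matrix.diagonal_mul_diagonal]
  refine congrArg diagonal (funext fun j => ?_)
  by_cases hj : lam X j = 0
  · simp [iot, hj]
  · have h0 := sqrt_pos_of_ne X hj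
    simp only [iot]
    simp only [hj, if_false]
    rw [inv_mul_eq_div, div_eq_iff (ne_of_gt h0)]
    exact (Real.mul_self_sqrt (lam_nonneg X j)).symm

lemma Wt_mul_W : (W X)ᵀ * W X = diagonal (chi X) := by
  rw [W, Matrix.transpose_mul, Matrix.diagonal_transpose, Matrix.mul_assoc,
    ← Matrix.mul_assoc (Y X)ᵀ, Yt_mul_Y, ← Matrix.mul_assoc,
    Matrix.diagonal_mul_diagonal, Matrix.diagonal_mul_diagonal]
  refine congrArg diagonal (funext fun j => ?_)
  by_cases hj : lam X j = 0
  · simp [iot, chi, hj]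
  · have h0 := sqrt_pos_of_ne X hj
    simp only [iot, chi]
    simp only [hj, if_false]
    rw [← Real.mul_self_sqrt (lam_nonneg X j)]
    field_simp
    rw [Real.sqrt_sq h0.le]

lemma W_mul_chi : W X * diagonal (chi X) = W X := by
  rw [W, Matrix.mul_assoc, Matrix.diagonal_mul_diagonal]
  have e : (fun j => iot X j * chi X j) = iot X := funext fun j => by
    by_cases hj : lam X j = 0 <;> simp [iot, chi, hj]
  rw [e]

lemma lower_bound (P : Matrix (Fin L) (Fin ρ) ℝ) (Q : Matrix (Fin T) (Fin ρ) ℝ)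
    (hX : X = P * Qᵀ) :
    nuclearNorm X ≤ (1 / 2) * (frobSq P + frobSq Q) := by
  have h1 : nuclearNorm X = ((Pᵀ * W X)ᵀ * (Qᵀ * Vm X)).trace := by
    have e : ∀ (W0 : Matrix (Fin L) (Fin T) ℝ) (V0 : Matrix (Fin T) (Fin T) ℝ),
        (Pᵀ * W0)ᵀ * (Qᵀ * V0) = W0ᵀ * (P * Qᵀ * V0) := fun W0 V0 => by
      simp [Matrix.transpose_mul, Matrix.transpose_transpose, Matrix.mul_assoc]
    calc nuclearNorm X = (diagonal fun j => Real.sqrt (NucAux.lam X j)).trace := by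
          rw [nuclearNorm_eq_sum_sqrt, Matrix.trace_diagonal]
      _ = ((W X)ᵀ * (X * Vm X)).trace := by rw [Wt_mul_XV]
      _ = ((Pᵀ * W X)ᵀ * (Qᵀ * Vm X)).trace := by rw [e, ← hX]
  -- bound trace of B-part
  have hB : ((Qᵀ * Vm X)ᵀ * (Qᵀ * Vm X)).trace = frobSq Q := by
    rw [Matrix.transpose_mul, Matrix.transpose_transpose, Matrix.trace_mul_comm,
      Matrix.mul_assoc, ← Matrix.mul_assoc (Vm X), V_mul_Vt, Matrix.one_mul,
      ← frobSq_eq_trace]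
  -- bound trace of A-part
  have hA : ((Pᵀ * W X)ᵀ * (Pᵀ * W X)).trace ≤ frobSq P := by
    set M : Matrix (Fin L) (Fin L) ℝ := 1 - W X * (W X)ᵀ with hM
    have hMt : Mᵀ = M := by
      rw [hM, Matrix.transpose_sub, Matrix.transpose_one, Matrix.transpose_mul,
        Matrix.transpose_transpose]
    have hWWW : W X * (W X)ᵀ * (W X * (W X)ᵀ) = W X * (W X)ᵀ := by
      rw [← Matrix.mul_assoc, Matrix.mul_assoc (W X), Wt_mul_W, W_mul_chi]
    have hMM : M * M = M := by
      rw [hM]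
      have expand : (1 - W X * (W X)ᵀ) * (1 - W X * (W X)ᵀ)
          = 1 - W X * (W X)ᵀ - W X * (W X)ᵀ + W X * (W X)ᵀ * (W X * (W X)ᵀ) := by
        noncomm_ring
      rw [expand, hWWW]
      abel
    have hkey : ((Pᵀ * W X)ᵀ * (Pᵀ * W X)).trace + ((M * P)ᵀ * (M * P)).trace
        = frobSq P := by
      have e1 : ((Pᵀ * W X)ᵀ * (Pᵀ * W X)).trace = (Pᵀ * (W X * (W X)ᵀ) * P).trace := by
        rw [Matrix.transpose_mul, Matrix.transpose_transpose, Matrix.trace_mul_comm]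
        congr 1
        simp [Matrix.mul_assoc]
      have e2 : ((M * P)ᵀ * (M * P)).trace = (Pᵀ * M * P).trace := by
        rw [Matrix.transpose_mul, Matrix.mul_assoc, ← Matrix.mul_assoc Mᵀ, hMt, hMM,
          ← Matrix.mul_assoc]
      rw [e1, e2, hM, frobSq_eq_trace, Matrix.mul_sub, Matrix.mul_one, Matrix.sub_mul,
        Matrix.trace_sub]
      ring
    have := trace_transpose_mul_self_nonneg (M * P)
    linarith
  have := trace_inner_le (Pᵀ * W X) (Qᵀ * Vm X)
  rw [hB] at this
  rw [h1]
  nlinarith [trace_transpose_mul_self_nonneg (Pᵀ * W X)]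

end Lower

end NucAux


namespace NucAux

section Upper

variable {L T ρ : ℕ} (X : Matrix (Fin L) (Fin T) ℝ)

lemma trace_sandwich {ρ : ℕ} (E : Matrix (Fin T) (Fin ρ) ℝ) (c d : Fin T → ℝ)
    (hEE : E * Eᵀ = diagonal c) :
    (Eᵀ * diagonal d * E).trace = ∑ j, c j * d j := by
  rw [Matrix.trace_mul_comm, ← Matrix.mul_assoc, hEE, Matrix.diagonal_mul_diagonal,
    Matrix.trace_diagonal]

lemma attains (hrank : X.rank ≤ ρ) :
    ∃ (P : Matrix (Fin L) (Fin ρ) ℝ) (Q : Matrix (Fin T) (Fin ρ) ℝ),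
      X = P * Qᵀ ∧ nuclearNorm X = (1 / 2) * (frobSq P + frobSq Q) := by
  classical
  have hcard : Fintype.card {j : Fin T // lam X j ≠ 0} ≤ Fintype.card (Fin ρ) := by
    have h1 := (Matrix.posSemidef_conjTranspose_mul_self X).1.rank_eq_card_non_zero_eigs
    have h2 := Matrix.rank_conjTranspose_mul_self X
    rw [Fintype.card_fin]
    calc Fintype.card {j : Fin T // lam X j ≠ 0} = (Xᴴ * X).rank := h1.symm
      _ = X.rank := h2
      _ ≤ ρ := hrank
  obtain ⟨f⟩ := Function.Embedding.nonempty_of_card_le hcard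
  set E : Matrix (Fin T) (Fin ρ) ℝ :=
    Matrix.of fun j k => if h : lam X j ≠ 0 then (if f ⟨j, h⟩ = k then (1:ℝ) else 0) else 0
    with hE
  have hEE : E * Eᵀ = diagonal (chi X) := by
    ext j j'
    rw [Matrix.mul_apply, Matrix.diagonal_apply]
    by_cases hj : lam X j = 0
    · have hz : ∀ k, E j k = 0 := fun k => by simp [hE, hj]
      simp only [hz, zero_mul, Finset.sum_const_zero]
      by_cases hjj : j = j'
      · subst hjj; simp [chi, hj]
      · simp [hjj]
    · have hjE : ∀ k, E j k = if f ⟨j, hj⟩ = k then (1:ℝ) else 0 := fun k => by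
        simp [hE, hj]
      have hsum : ∀ k, E j k * Eᵀ k j' = if f ⟨j, hj⟩ = k then E j' k else 0 := fun k => by
        rw [hjE k, Matrix.transpose_apply, ite_mul, one_mul, zero_mul]
      rw [Finset.sum_congr rfl fun k _ => hsum k, Finset.sum_ite_eq]
      simp only [Finset.mem_univ, if_true]
      by_cases hj' : lam X j' = 0
      · have hne : ¬ j = j' := fun h => hj (h ▸ hj')
        simp [hE, hj', hne]
      · have : E j' (f ⟨j, hj⟩) = if f ⟨j', hj'⟩ = f ⟨j, hj⟩ then (1:ℝ) else 0 := by
          simp [hE, hj']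
        rw [this]
        by_cases hjj : j = j'
        · subst hjj; simp [chi, hj]
        · have : ¬ f ⟨j', hj'⟩ = f ⟨j, hj⟩ := fun h => hjj (by
            have := f.injective h
            exact (Subtype.ext_iff.mp this).symm)
          simp [this, hjj]
  set μ : Fin T → ℝ := fun j => Real.sqrt (Real.sqrt (lam X j)) with hμ
  set ν : Fin T → ℝ := fun j => if lam X j = 0 then 0 else (μ j)⁻¹ with hν
  have hμ_sq : ∀ j, μ j * μ j = Real.sqrt (lam X j) := fun j =>
    Real.mul_self_sqrt (Real.sqrt_nonneg _)
  have hμ_ne : ∀ j, lam X j ≠ 0 → μ j ≠ 0 := fun j hj =>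
    Real.sqrt_ne_zero'.mpr (sqrt_pos_of_ne X hj)
  refine ⟨Y X * diagonal ν * E, Vm X * diagonal μ * E, ?_, ?_⟩
  · -- X = P * Qᵀ
    have hQt : (Vm X * diagonal μ * E)ᵀ = Eᵀ * diagonal μ * (Vm X)ᵀ := by
      simp [Matrix.transpose_mul, Matrix.diagonal_transpose, Matrix.mul_assoc]
    rw [hQt]
    have : Y X * diagonal ν * E * (Eᵀ * diagonal μ * (Vm X)ᵀ)
        = Y X * (diagonal ν * (E * Eᵀ) * diagonal μ) * (Vm X)ᵀ := by
      simp [Matrix.mul_assoc]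
    rw [this, hEE, Matrix.diagonal_mul_diagonal, Matrix.diagonal_mul_diagonal]
    refine (Y_mul_diagonal_eq X _ fun j hj => ?_).symm
    simp only [hν]
    simp only [chi, hj, if_neg hj, if_false]
    field_simp [hμ_ne j hj]
  · -- value
    have hPtP : (Y X * diagonal ν * E)ᵀ * (Y X * diagonal ν * E)
        = Eᵀ * diagonal (fun j => ν j * lam X j * ν j) * E := by
      have : (Y X * diagonal ν * E)ᵀ = Eᵀ * diagonal ν * (Y X)ᵀ := by
        simp [Matrix.transpose_mul, Matrix.diagonal_transpose, Matrix.mul_assoc]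
      rw [this]
      have h2 : Eᵀ * diagonal ν * (Y X)ᵀ * (Y X * diagonal ν * E)
          = Eᵀ * (diagonal ν * ((Y X)ᵀ * Y X) * diagonal ν) * E := by
        simp [Matrix.mul_assoc]
      rw [h2, Yt_mul_Y, Matrix.diagonal_mul_diagonal, Matrix.diagonal_mul_diagonal]
    have hQtQ : (Vm X * diagonal μ * E)ᵀ * (Vm X * diagonal μ * E)
        = Eᵀ * diagonal (fun j => μ j * μ j) * E := by
      have : (Vm X * diagonal μ * E)ᵀ = Eᵀ * diagonal μ * (Vm X)ᵀ := by
        simp [Matrix.transpose_mul, Matrix.diagonal_transpose, Matrix.mul_assoc]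
      rw [this]
      have h2 : Eᵀ * diagonal μ * (Vm X)ᵀ * (Vm X * diagonal μ * E)
          = Eᵀ * (diagonal μ * ((Vm X)ᵀ * Vm X) * diagonal μ) * E := by
        simp [Matrix.mul_assoc]
      rw [h2, Vt_mul_V, Matrix.mul_one, Matrix.diagonal_mul_diagonal]
    have hcP : ∀ j, chi X j * (ν j * lam X j * ν j) = Real.sqrt (lam X j) := by
      intro j
      by_cases hj : lam X j = 0
      · simp [chi, hν, hj]
      · simp only [chi, hν, if_neg hj]
        rw [one_mul]
        have h0 := sqrt_pos_of_ne X hj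
        have e1 : (μ j)⁻¹ * lam X j * (μ j)⁻¹ = lam X j * (μ j * μ j)⁻¹ := by
          rw [mul_inv]; ring
        rw [e1, hμ_sq j]
        field_simp
        rw [Real.sq_sqrt (lam_nonneg X j)]
    have hcQ : ∀ j, chi X j * (μ j * μ j) = Real.sqrt (lam X j) := by
      intro j
      by_cases hj : lam X j = 0
      · simp [chi, hj, Real.sqrt_eq_zero', hμ_sq]
      · simp only [chi, if_neg hj, one_mul, hμ_sq]
    rw [nuclearNorm_eq_sum_sqrt, frobSq_eq_trace, frobSq_eq_trace, hPtP, hQtQ,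
      trace_sandwich E _ _ hEE, trace_sandwich E _ _ hEE]
    rw [Finset.sum_congr rfl fun j _ => hcP j, Finset.sum_congr rfl fun j _ => hcQ j]
    ring

end Upper

end NucAux

/-- Bilinear factorization characterization of the nuclear norm: if
`rank(X) ≤ ρ`, then `‖X‖_* = min { (1/2)(‖P‖_F² + ‖Q‖_F²) : X = P Qᵀ }`, the
minimum being attained; in particular every factorization `X = P Qᵀ` satisfies
`‖X‖_* ≤ (1/2)(‖P‖_F² + ‖Q‖_F²)`. -/
theorem nuclearNorm_eq_min_factorization
    (L T ρ : ℕ) (X : Matrix (Fin L) (Fin T) ℝ) (hrank : X.rank ≤ ρ) :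
    IsLeast
      {t : ℝ | ∃ (P : Matrix (Fin L) (Fin ρ) ℝ) (Q : Matrix (Fin T) (Fin ρ) ℝ),
        X = P * Qᵀ ∧ t = (1 / 2) * (frobSq P + frobSq Q)}
      (nuclearNorm X) := by
  constructor
  · obtain ⟨P, Q, h1, h2⟩ := NucAux.attains X hrank
    exact ⟨P, Q, h1, h2⟩
  · rintro t ⟨P, Q, hX, rfl⟩
    exact NucAux.lower_bound X P Q hX
end
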